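/- arXiv:0904.0328 — 8 statements merged into one kernel-verified Lean document; each statement's English description precedes it below -/
import Mathlib

section
/- Let α and β be finite types with |α| = n₁ and |β| = n₂. Then the sum, over all functions f : α → β, of the cardinality of the image of f equals n₂^(n₁+1) − n₂·(n₂−1)^(n₁). Equivalently, when β is nonempty, the average image size of a map from an n₁-element set to an n₂-element set is n₂·(1 − (1 − 1/n₂)^(n₁)). -/
open Finset

theorem avoid_count (α β : Type*) [Fintype α] [Fintype β] [DecidableEq α] [DecidableEq β]
    (b : β) :
    (univ.filter (fun f : α → β => b ∉ univ.image f)).card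
      = (Fintype.card β - 1) ^ Fintype.card α := by
  classical
  rw [← Fintype.card_subtype]
  have e : {f : α → β // b ∉ univ.image f} ≃ (α → {x : β // x ≠ b}) :=
    { toFun := fun f a => ⟨f.1 a, fun h => f.2 (mem_image.mpr ⟨a, mem_univ a, h⟩)⟩
      invFun := fun g => ⟨fun a => (g a).1, fun h => by
        obtain ⟨a, -, ha⟩ := mem_image.mp h
        exact (g a).2 ha⟩
      left_inv := fun f => rfl
      right_inv := fun g => rfl }
  rw [Fintype.card_congr e, Fintype.card_fun]
  congr 1
  simp [Fintype.card_subtype_compl]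

theorem average_image_size (α β : Type*) [Fintype α] [Fintype β]
    [DecidableEq α] [DecidableEq β] (n₁ n₂ : ℕ)
    (h₁ : Fintype.card α = n₁) (h₂ : Fintype.card β = n₂) :
    ∑ f : α → β, ((Finset.univ.image f).card : ℤ) =
      (n₂ : ℤ) ^ (n₁ + 1) - (n₂ : ℤ) * ((n₂ : ℤ) - 1) ^ n₁ := by
  classical
  subst h₁; subst h₂
  have step1 : ∀ f : α → β, ((univ.image f).card : ℤ)
      = ∑ b : β, if b ∈ univ.image f then (1:ℤ) else 0 := by
    intro f
    rw [Finset.sum_ite_mem, Finset.univ_inter, Finset.sum_const, nsmul_eq_mul, mul_one]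
  simp_rw [step1]
  rw [Finset.sum_comm]
  have step2 : ∀ b : β, (∑ f : α → β, if b ∈ univ.image f then (1:ℤ) else 0)
      = (Fintype.card β : ℤ) ^ Fintype.card α
        - ((Fintype.card β : ℤ) - 1) ^ Fintype.card α := by
    intro b
    have hb : (1:ℕ) ≤ Fintype.card β := Fintype.card_pos_iff.mpr ⟨b⟩
    have h1 : (∑ f : α → β, if b ∈ univ.image f then (1:ℤ) else 0)
        = ∑ f : α → β, ((1:ℤ) - if b ∉ univ.image f then (1:ℤ) else 0) := by
      apply Finset.sum_congr rfl; intro f _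
      by_cases h : b ∈ univ.image f <;> simp [h]
    rw [h1, Finset.sum_sub_distrib, Finset.sum_const, Finset.sum_boole,
      avoid_count, nsmul_eq_mul, mul_one, Finset.card_univ, Fintype.card_fun]
    push_cast [Nat.cast_sub hb]
    ring
  simp_rw [step2]
  rw [Finset.sum_const, Finset.card_univ, nsmul_eq_mul]
  ring
end

section
/- For every m : ℕ one has F m ≠ 0; moreover if m is even then natDegree((F m).num) = natDegree((F m).denom), and if m is odd then natDegree((F m).num) = natDegree((F m).denom) + 1. -/
open Polynomial

noncomputable def F : ℕ → RatFunc ℚ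
  | 0 => (2 * RatFunc.X) / (RatFunc.X + 1)
  | (m + 1) => ((F m - RatFunc.X) * (F m - 1)) / (F m) ^ 2

private lemma sub_lead {p q : ℚ[X]} {n : ℕ} (hp : p.natDegree ≤ n) (hq : q.natDegree ≤ n)
    (h : p.coeff n ≠ q.coeff n) :
    p - q ≠ 0 ∧ (p - q).natDegree = n ∧ (p - q).leadingCoeff = p.coeff n - q.coeff n := by
  have hc : (p - q).coeff n = p.coeff n - q.coeff n := by simp
  have hne : (p - q).coeff n ≠ 0 := by rw [hc]; exact sub_ne_zero.mpr h
  have hd : (p - q).natDegree = n :=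
    le_antisymm (le_trans (natDegree_sub_le p q) (max_le hp hq)) (le_natDegree_of_ne_zero hne)
  refine ⟨fun h0 => hne (by rw [h0]; simp), hd, ?_⟩
  rw [← coeff_natDegree, hd, hc]

private lemma key (m : ℕ) : ∃ p q : ℚ[X], p ≠ 0 ∧ q ≠ 0 ∧
    F m = algebraMap ℚ[X] (RatFunc ℚ) p / algebraMap ℚ[X] (RatFunc ℚ) q ∧
    ((Even m ∧ p.natDegree = q.natDegree ∧
        (p.leadingCoeff - q.leadingCoeff) * q.leadingCoeff > 0) ∨
      (Odd m ∧ p.natDegree = q.natDegree + 1 ∧ p.leadingCoeff * q.leadingCoeff < 0)) := by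
  induction m with
  | zero =>
    have h2C : (2 : ℚ[X]) = C 2 := (map_ofNat C 2).symm
    have hd1 : (2 * X : ℚ[X]).natDegree = 1 := by
      rw [h2C]; exact natDegree_C_mul_X (2 : ℚ) two_ne_zero
    have hd2 : ((X : ℚ[X]) + 1).natDegree = 1 := by
      simpa using natDegree_X_add_C (1 : ℚ)
    have hl1 : (2 * X : ℚ[X]).leadingCoeff = 2 := by
      rw [h2C, leadingCoeff_mul, leadingCoeff_C, leadingCoeff_X, mul_one]
    have hl2 : ((X : ℚ[X]) + 1).leadingCoeff = 1 := by
      simpa using (monic_X_add_C (1 : ℚ)).leadingCoeff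
    refine ⟨2 * X, X + 1, ?_, ?_, ?_, Or.inl ⟨Even.zero, by rw [hd1, hd2], ?_⟩⟩
    · intro h; rw [h] at hd1; simp at hd1
    · intro h; rw [h] at hl2; simp at hl2
    · simp [F, map_mul, map_add, map_one, RatFunc.algebraMap_X, map_ofNat]
    · rw [hl1, hl2]; norm_num
  | succ m ih =>
    obtain ⟨p, q, hp, hq, hF, hcase⟩ := ih
    obtain ⟨a, ha'⟩ : ∃ a, p.leadingCoeff = a := ⟨_, rfl⟩
    obtain ⟨b, hb'⟩ : ∃ b, q.leadingCoeff = b := ⟨_, rfl⟩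
    obtain ⟨n, hn⟩ : ∃ n, q.natDegree = n := ⟨_, rfl⟩
    rw [ha', hb'] at hcase
    have ha : a ≠ 0 := ha' ▸ leadingCoeff_ne_zero.mpr hp
    have hb : b ≠ 0 := hb' ▸ leadingCoeff_ne_zero.mpr hq
    have hP : algebraMap ℚ[X] (RatFunc ℚ) p ≠ 0 := RatFunc.algebraMap_ne_zero hp
    have hQ : algebraMap ℚ[X] (RatFunc ℚ) q ≠ 0 := RatFunc.algebraMap_ne_zero hq
    have hFeq : F (m + 1) = algebraMap ℚ[X] (RatFunc ℚ) ((p - X * q) * (p - q)) /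
        algebraMap ℚ[X] (RatFunc ℚ) (p ^ 2) := by
      rw [show F (m + 1) = ((F m - RatFunc.X) * (F m - 1)) / (F m) ^ 2 from rfl, hF]
      rw [← RatFunc.algebraMap_X]
      push_cast [map_mul, map_sub, map_pow]
      field_simp
    have hXqd : (X * q).natDegree = n + 1 := by
      rw [natDegree_mul X_ne_zero hq, natDegree_X, hn]; omega
    have hXqc : (X * q).coeff (n + 1) = b := by rw [coeff_X_mul, ← hn, coeff_natDegree, hb']
    rcases hcase with ⟨hev, hdeg, hsgn⟩ | ⟨hod, hdeg, hsgn⟩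
    · -- even → odd : deg p = deg q = n
      rw [hn] at hdeg
      have hpc1 : p.coeff (n + 1) = 0 := coeff_eq_zero_of_natDegree_lt (by omega)
      have hpc : p.coeff n = a := by rw [← hdeg, coeff_natDegree, ha']
      have hqc : q.coeff n = b := by rw [← hn, coeff_natDegree, hb']
      have hab : a ≠ b := fun h => by rw [h, sub_self, zero_mul] at hsgn; exact lt_irrefl 0 hsgn
      obtain ⟨hne1, hd1, hl1⟩ := sub_lead (p := p) (q := X * q) (n := n + 1) (by omega) (le_of_eq hXqd)
        (by rw [hpc1, hXqc]; exact fun h => hb h.symm)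
      obtain ⟨hne2, hd2, hl2⟩ := sub_lead (n := n) (le_of_eq hdeg) (le_of_eq hn)
        (by rw [hpc, hqc]; exact hab)
      refine ⟨(p - X * q) * (p - q), p ^ 2, mul_ne_zero hne1 hne2, pow_ne_zero 2 hp,
        hFeq, Or.inr ⟨by simpa using hev.add_one, ?_, ?_⟩⟩
      · rw [natDegree_mul hne1 hne2, natDegree_pow, hd1, hd2, hdeg]; ring
      · rw [leadingCoeff_mul, leadingCoeff_pow, hl1, hl2, hpc1, hXqc, hpc, hqc, ha']
        have ha2 : a ^ 2 > 0 := by positivity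
        nlinarith
    · -- odd → even : deg p = n + 1, deg q = n
      rw [hn] at hdeg
      have hpc : p.coeff (n + 1) = a := by rw [← hdeg, coeff_natDegree, ha']
      have hqc1 : q.coeff (n + 1) = 0 := coeff_eq_zero_of_natDegree_lt (by omega)
      have hab : a ≠ b := by intro h; rw [h] at hsgn; nlinarith
      obtain ⟨hne1, hd1, hl1⟩ := sub_lead (n := n + 1) (le_of_eq hdeg) (le_of_eq hXqd)
        (by rw [hpc, hXqc]; exact hab)
      obtain ⟨hne2, hd2, hl2⟩ := sub_lead (p := p) (q := q) (n := n + 1) (le_of_eq hdeg) (by omega)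
        (by rw [hpc, hqc1]; exact ha)
      refine ⟨(p - X * q) * (p - q), p ^ 2, mul_ne_zero hne1 hne2, pow_ne_zero 2 hp,
        hFeq, Or.inl ⟨by simpa using hod.add_one, ?_, ?_⟩⟩
      · rw [natDegree_mul hne1 hne2, natDegree_pow, hd1, hd2, hdeg]; ring
      · rw [leadingCoeff_mul, leadingCoeff_pow, hl1, hl2, hpc, hXqc, hqc1, ha']
        have ha2 : a ^ 2 > 0 := by positivity
        nlinarith

theorem F_ne_zero_and_degrees (m : ℕ) :
    F m ≠ 0 ∧
    (Even m → (F m).num.natDegree = (F m).denom.natDegree) ∧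
    (Odd m → (F m).num.natDegree = (F m).denom.natDegree + 1) := by
  obtain ⟨p, q, hp, hq, hF, hcase⟩ := key m
  have hP : algebraMap ℚ[X] (RatFunc ℚ) p ≠ 0 := RatFunc.algebraMap_ne_zero hp
  have hQ : algebraMap ℚ[X] (RatFunc ℚ) q ≠ 0 := RatFunc.algebraMap_ne_zero hq
  have hFne : F m ≠ 0 := by rw [hF]; exact div_ne_zero hP hQ
  have hmul : F m * algebraMap ℚ[X] (RatFunc ℚ) q = algebraMap ℚ[X] (RatFunc ℚ) p := by
    rw [hF]; field_simp
  have hid : (F m).intDegree + q.natDegree = p.natDegree := by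
    have := RatFunc.intDegree_mul hFne hQ
    rw [hmul, RatFunc.intDegree_polynomial, RatFunc.intDegree_polynomial] at this
    linarith
  have hid' : ((F m).num.natDegree : ℤ) - (F m).denom.natDegree + q.natDegree = p.natDegree := hid
  refine ⟨hFne, ?_, ?_⟩
  · intro hev
    rcases hcase with ⟨_, hdeg, _⟩ | ⟨hod, _, _⟩
    · omega
    · exact absurd hev (Nat.not_even_iff_odd.mpr hod)
  · intro hod
    rcases hcase with ⟨hev, _, _⟩ | ⟨_, hdeg, _⟩
    · exact absurd hev (Nat.not_even_iff_odd.mpr hod)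
    · omega
end

section
/- For every m : ℕ: if m is even then the leading coefficient of (F m).num is a rational number ≥ 2, and if m is odd then the leading coefficient of (F m).num lies strictly between −1 and 0. -/
open Polynomial

lemma num_lc_of_eq_div {x : RatFunc ℚ} {A B : ℚ[X]} (hA : A ≠ 0) (hB : B ≠ 0)
    (h : x = algebraMap _ _ A / algebraMap _ _ B) :
    x.num.leadingCoeff * B.leadingCoeff = A.leadingCoeff ∧
    x.num.natDegree + B.natDegree = A.natDegree + x.denom.natDegree := by
  have key : x.num * B = A * x.denom := (RatFunc.num_mul_eq_mul_denom_iff hB).mpr h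
  have hx : x ≠ 0 := by
    rw [h]
    exact div_ne_zero (RatFunc.algebraMap_ne_zero hA) (RatFunc.algebraMap_ne_zero hB)
  have hn : x.num ≠ 0 := RatFunc.num_ne_zero hx
  have hd : x.denom ≠ 0 := RatFunc.denom_ne_zero x
  constructor
  · have := congrArg Polynomial.leadingCoeff key
    rwa [Polynomial.leadingCoeff_mul, Polynomial.leadingCoeff_mul,
      (RatFunc.monic_denom x).leadingCoeff, mul_one] at this
  · have := congrArg Polynomial.natDegree key
    rwa [Polynomial.natDegree_mul hn hB, Polynomial.natDegree_mul hA hd] at this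

lemma natDegree_sub_of_eq {p q : ℚ[X]} (h : p.natDegree = q.natDegree)
    (hlc : p.leadingCoeff ≠ q.leadingCoeff) :
    (p - q).natDegree = p.natDegree ∧
    (p - q).leadingCoeff = p.leadingCoeff - q.leadingCoeff := by
  have hc : (p - q).coeff p.natDegree = p.leadingCoeff - q.leadingCoeff := by
    rw [Polynomial.coeff_sub, Polynomial.coeff_natDegree, h, Polynomial.coeff_natDegree]
  have hne : (p - q).coeff p.natDegree ≠ 0 := by rw [hc]; exact sub_ne_zero_of_ne hlc
  have hle : (p - q).natDegree ≤ p.natDegree := by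
    refine le_trans (Polynomial.natDegree_sub_le p q) ?_
    simp [h]
  have hdeg : (p - q).natDegree = p.natDegree :=
    le_antisymm hle (Polynomial.le_natDegree_of_ne_zero hne)
  exact ⟨hdeg, by rw [Polynomial.leadingCoeff, hdeg, hc]⟩

lemma div_step_eq (a b : ℚ[X]) (ha : a ≠ 0) (hb : b ≠ 0) :
    ((algebraMap ℚ[X] (RatFunc ℚ) a / algebraMap ℚ[X] (RatFunc ℚ) b - RatFunc.X) *
        (algebraMap ℚ[X] (RatFunc ℚ) a / algebraMap ℚ[X] (RatFunc ℚ) b - 1)) /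
      (algebraMap ℚ[X] (RatFunc ℚ) a / algebraMap ℚ[X] (RatFunc ℚ) b) ^ 2
      = algebraMap ℚ[X] (RatFunc ℚ) ((a - Polynomial.X * b) * (a - b))
        / algebraMap ℚ[X] (RatFunc ℚ) (a ^ 2) := by
  have ha' : algebraMap ℚ[X] (RatFunc ℚ) a ≠ 0 := RatFunc.algebraMap_ne_zero ha
  have hb' : algebraMap ℚ[X] (RatFunc ℚ) b ≠ 0 := RatFunc.algebraMap_ne_zero hb
  simp only [map_mul, map_sub, map_pow, RatFunc.algebraMap_X]
  field_simp

lemma step_eq (G : RatFunc ℚ) (hG : G ≠ 0) :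
    ((G - RatFunc.X) * (G - 1)) / G ^ 2
      = algebraMap _ _ ((G.num - Polynomial.X * G.denom) * (G.num - G.denom))
        / algebraMap _ _ (G.num ^ 2) := by
  conv_lhs => rw [← RatFunc.num_div_denom G]
  exact div_step_eq G.num G.denom (RatFunc.num_ne_zero hG) (RatFunc.denom_ne_zero G)

lemma key_lemma (m : ℕ) :
    (Even m → (F m).num.natDegree = (F m).denom.natDegree ∧ 2 ≤ (F m).num.leadingCoeff) ∧
    (Odd m → (F m).num.natDegree = (F m).denom.natDegree + 1 ∧
      -1 < (F m).num.leadingCoeff ∧ (F m).num.leadingCoeff < 0) := by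
  induction m with
  | zero =>
    have lA : (2 * Polynomial.X : ℚ[X]).leadingCoeff = 2 := by
      rw [show (2 * Polynomial.X : ℚ[X]) = Polynomial.C 2 * Polynomial.X by norm_cast,
        Polynomial.leadingCoeff_mul, Polynomial.leadingCoeff_C, Polynomial.leadingCoeff_X, mul_one]
    have lB : (Polynomial.X + 1 : ℚ[X]).leadingCoeff = 1 := by
      simpa using Polynomial.leadingCoeff_X_add_C (1 : ℚ)
    have dA : (2 * Polynomial.X : ℚ[X]).natDegree = 1 := by
      rw [show (2 * Polynomial.X : ℚ[X]) = Polynomial.C 2 * Polynomial.X by norm_cast]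
      rw [Polynomial.natDegree_C_mul (by norm_num), Polynomial.natDegree_X]
    have dB : (Polynomial.X + 1 : ℚ[X]).natDegree = 1 := by
      simpa using Polynomial.natDegree_X_add_C (1 : ℚ)
    have hA : (2 * Polynomial.X : ℚ[X]) ≠ 0 := fun hc => by simp [hc] at lA
    have hB : (Polynomial.X + 1 : ℚ[X]) ≠ 0 := fun hc => by simp [hc] at dB
    have h : F 0 = algebraMap ℚ[X] (RatFunc ℚ) (2 * Polynomial.X)
        / algebraMap ℚ[X] (RatFunc ℚ) (Polynomial.X + 1) := by
      show (2 * RatFunc.X) / (RatFunc.X + 1) = _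
      simp [map_mul, map_add, map_ofNat, RatFunc.algebraMap_X]
    obtain ⟨h1, h2⟩ := num_lc_of_eq_div hA hB h
    rw [lA, lB, mul_one] at h1
    rw [dA, dB] at h2
    refine ⟨fun _ => ⟨by omega, by rw [h1]⟩, fun ho => absurd ho (by simp)⟩
  | succ n ih =>
    rcases Nat.even_or_odd n with he | ho
    · -- n even, n+1 odd
      obtain ⟨hdeg, hlc⟩ := ih.1 he
      set p := (F n).num with hp'
      set q := (F n).denom with hq'
      set c := p.leadingCoeff with hc'
      have hc0 : (0:ℚ) < c := by linarith
      have hp : p ≠ 0 := Polynomial.leadingCoeff_ne_zero.mp (by positivity)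
      have hq : q ≠ 0 := RatFunc.denom_ne_zero _
      have hG : F n ≠ 0 := by
        intro h0; exact hp (by rw [hp', h0, RatFunc.num_zero])
      have heq : F (n + 1) = algebraMap ℚ[X] (RatFunc ℚ)
          ((p - Polynomial.X * q) * (p - q)) / algebraMap ℚ[X] (RatFunc ℚ) (p ^ 2) := by
        show ((F n - RatFunc.X) * (F n - 1)) / (F n) ^ 2 = _
        exact step_eq (F n) hG
      have hXq : (Polynomial.X * q).natDegree = q.natDegree + 1 := by
        rw [Polynomial.natDegree_mul Polynomial.X_ne_zero hq, Polynomial.natDegree_X]; omega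
      have hdlt : p.natDegree < (Polynomial.X * q).natDegree := by omega
      have d1 : (p - Polynomial.X * q).natDegree = q.natDegree + 1 := by
        rw [Polynomial.natDegree_sub_eq_right_of_natDegree_lt hdlt, hXq]
      have l1 : (p - Polynomial.X * q).leadingCoeff = -1 := by
        rw [Polynomial.leadingCoeff_sub_of_degree_lt' (Polynomial.degree_lt_degree hdlt),
          Polynomial.leadingCoeff_mul, Polynomial.leadingCoeff_X,
          (RatFunc.monic_denom (F n)).leadingCoeff]
        norm_num
      have hlcne : p.leadingCoeff ≠ q.leadingCoeff := by
        rw [(RatFunc.monic_denom (F n)).leadingCoeff, ← hc']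
        intro h; rw [h] at hlc; linarith
      obtain ⟨d2, l2⟩ := natDegree_sub_of_eq hdeg hlcne
      rw [(RatFunc.monic_denom (F n)).leadingCoeff] at l2
      have hf1 : (p - Polynomial.X * q) ≠ 0 := fun h0 => by rw [h0] at l1; simp at l1
      have hf2 : (p - q) ≠ 0 := by
        intro h0; rw [h0] at l2; simp only [Polynomial.leadingCoeff_zero] at l2
        rw [← hc'] at l2; linarith
      have hA : ((p - Polynomial.X * q) * (p - q)) ≠ 0 := mul_ne_zero hf1 hf2
      have hB : (p ^ 2) ≠ 0 := pow_ne_zero 2 hp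
      obtain ⟨h1, h2⟩ := num_lc_of_eq_div hA hB heq
      rw [Polynomial.leadingCoeff_mul, Polynomial.leadingCoeff_pow, l1, l2, ← hc'] at h1
      rw [Polynomial.natDegree_mul hf1 hf2, Polynomial.natDegree_pow, d1, d2, hdeg] at h2
      set L := (F (n + 1)).num.leadingCoeff with hL'
      have hcc : (0:ℚ) < c * c := mul_pos hc0 hc0
      have hbnd : -1 < L ∧ L < 0 := by
        constructor
        · nlinarith [mul_nonneg (by linarith : (0:ℚ) ≤ c - 2) (le_of_lt hc0)]
        · nlinarith []
      exact ⟨fun hcon => absurd he (Nat.even_add_one.mp hcon),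
        fun _ => ⟨by omega, hbnd⟩⟩
    · -- n odd, n+1 even
      obtain ⟨hdeg, hk1, hk2⟩ := ih.2 ho
      set p := (F n).num with hp'
      set q := (F n).denom with hq'
      set k := p.leadingCoeff with hc'
      have hp : p ≠ 0 := Polynomial.leadingCoeff_ne_zero.mp (by rw [← hc']; linarith)
      have hq : q ≠ 0 := RatFunc.denom_ne_zero _
      have hG : F n ≠ 0 := by
        intro h0; exact hp (by rw [hp', h0, RatFunc.num_zero])
      have heq : F (n + 1) = algebraMap ℚ[X] (RatFunc ℚ)
          ((p - Polynomial.X * q) * (p - q)) / algebraMap ℚ[X] (RatFunc ℚ) (p ^ 2) := by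
        show ((F n - RatFunc.X) * (F n - 1)) / (F n) ^ 2 = _
        exact step_eq (F n) hG
      have hXq : (Polynomial.X * q).natDegree = q.natDegree + 1 := by
        rw [Polynomial.natDegree_mul Polynomial.X_ne_zero hq, Polynomial.natDegree_X]; omega
      have hXqlc : (Polynomial.X * q).leadingCoeff = 1 := by
        rw [Polynomial.leadingCoeff_mul, Polynomial.leadingCoeff_X,
          (RatFunc.monic_denom (F n)).leadingCoeff, mul_one]
      have hdeq : p.natDegree = (Polynomial.X * q).natDegree := by omega
      have hlcne : p.leadingCoeff ≠ (Polynomial.X * q).leadingCoeff := by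
        rw [hXqlc, ← hc']; intro h; rw [h] at hk2; linarith
      obtain ⟨d1, l1⟩ := natDegree_sub_of_eq hdeq hlcne
      rw [hXqlc, ← hc'] at l1
      have hdlt : q.natDegree < p.natDegree := by omega
      have d2 : (p - q).natDegree = p.natDegree :=
        Polynomial.natDegree_sub_eq_left_of_natDegree_lt hdlt
      have l2 : (p - q).leadingCoeff = k :=
        Polynomial.leadingCoeff_sub_of_degree_lt (Polynomial.degree_lt_degree hdlt)
      have hf1 : (p - Polynomial.X * q) ≠ 0 := by
        intro h0; rw [h0] at l1; simp only [Polynomial.leadingCoeff_zero] at l1; linarith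
      have hf2 : (p - q) ≠ 0 := by
        intro h0; rw [h0] at l2; simp only [Polynomial.leadingCoeff_zero] at l2; linarith
      have hA : ((p - Polynomial.X * q) * (p - q)) ≠ 0 := mul_ne_zero hf1 hf2
      have hB : (p ^ 2) ≠ 0 := pow_ne_zero 2 hp
      obtain ⟨h1, h2⟩ := num_lc_of_eq_div hA hB heq
      rw [Polynomial.leadingCoeff_mul, Polynomial.leadingCoeff_pow, l1, l2, ← hc'] at h1
      rw [Polynomial.natDegree_mul hf1 hf2, Polynomial.natDegree_pow, d1, d2, hdeg] at h2
      set L := (F (n + 1)).num.leadingCoeff with hL'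
      have hkk : (0:ℚ) < k * k := mul_pos_of_neg_of_neg hk2 hk2
      have hbnd : 2 ≤ L := by
        nlinarith [mul_neg_of_neg_of_pos hk2 (by linarith : (0:ℚ) < k + 1)]
      exact ⟨fun _ => ⟨by omega, hbnd⟩,
        fun hcon => absurd ho (Nat.odd_add_one.mp hcon)⟩

theorem F_num_leadingCoeff (m : ℕ) :
    (Even m → 2 ≤ (F m).num.leadingCoeff) ∧
    (Odd m → -1 < (F m).num.leadingCoeff ∧ (F m).num.leadingCoeff < 0) := by
  exact ⟨fun h => ((key_lemma m).1 h).2, fun h => ((key_lemma m).2 h).2⟩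
end

section
/- For every m : ℕ: the polynomial X divides (F m).num if and only if m ≡ 0 (mod 3); X divides (F m).denom if and only if m ≡ 1 (mod 3); and X divides (F m).num − (F m).denom if and only if m ≡ 2 (mod 3). -/
open Polynomial

local notation "K" => RatFunc ℚ
local notation "ι" => algebraMap (Polynomial ℚ) (RatFunc ℚ)

/-- `G` is finite at `X = 0` with value `v`. -/
def Loc (G : RatFunc ℚ) (v : ℚ) : Prop :=
  ∃ p q : Polynomial ℚ, q.eval 0 ≠ 0 ∧ G * algebraMap (Polynomial ℚ) (RatFunc ℚ) q
    = algebraMap (Polynomial ℚ) (RatFunc ℚ) p ∧ p.eval 0 = v * q.eval 0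

lemma X_dvd_iff_eval (p : Polynomial ℚ) : X ∣ p ↔ p.eval 0 = 0 := by
  rw [X_dvd_iff, coeff_zero_eq_eval_zero]

lemma GdG (G : RatFunc ℚ) : G * ι G.denom = ι G.num := by
  have hd : (ι G.denom) ≠ 0 := RatFunc.algebraMap_ne_zero G.denom_ne_zero
  have h := (div_eq_iff hd).mp (RatFunc.num_div_denom G)
  rw [← h]

lemma cross {G : RatFunc ℚ} {p q : Polynomial ℚ}
    (h : G * ι q = ι p) : G.num * q = G.denom * p := by
  apply RatFunc.algebraMap_injective ℚ
  simp only [map_mul]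
  calc ι G.num * ι q = (G * ι G.denom) * ι q := by rw [GdG]
    _ = (G * ι q) * ι G.denom := by ring
    _ = ι G.denom * ι p := by rw [h]; ring

lemma loc_unique {G : RatFunc ℚ} {v w : ℚ} (hv : Loc G v) (hw : Loc G w) : v = w := by
  obtain ⟨p1, q1, hq1, h1, he1⟩ := hv
  obtain ⟨p2, q2, hq2, h2, he2⟩ := hw
  have : (p1 * q2) = (p2 * q1) := by
    apply RatFunc.algebraMap_injective ℚ
    simp only [map_mul]
    calc ι p1 * ι q2 = (G * ι q1) * ι q2 := by rw [h1]
      _ = (G * ι q2) * ι q1 := by ring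
      _ = ι p2 * ι q1 := by rw [h2]
  have hev := congrArg (Polynomial.eval 0) this
  simp only [eval_mul] at hev
  rw [he1, he2] at hev
  have h0 : (v - w) * (q1.eval 0 * q2.eval 0) = 0 := by ring_nf; linarith [hev]
  rcases mul_eq_zero.mp h0 with h | h
  · linarith
  · exact absurd h (mul_ne_zero hq1 hq2)

lemma dvd_num_iff {G : RatFunc ℚ} : X ∣ G.num ↔ Loc G 0 := by
  constructor
  · intro h
    refine ⟨G.num, G.denom, ?_, GdG G, ?_⟩
    · intro h0
      rw [← X_dvd_iff_eval] at h0
      exact Polynomial.not_isUnit_X ((G.isCoprime_num_denom).isUnit_of_dvd' h h0)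
    · rw [(X_dvd_iff_eval _).mp h]; ring
  · rintro ⟨p, q, hq, h, he⟩
    have hc := congrArg (Polynomial.eval 0) (cross h)
    simp only [eval_mul] at hc
    rw [he] at hc
    rw [X_dvd_iff_eval]
    have h0 : G.num.eval 0 * q.eval 0 = 0 := by rw [hc]; ring
    exact (mul_eq_zero.mp h0).resolve_right hq

lemma dvd_denom_iff {G : RatFunc ℚ} : X ∣ G.denom ↔ ∀ v, ¬ Loc G v := by
  constructor
  · rintro h v ⟨p, q, hq, heq, he⟩
    have hc := congrArg (Polynomial.eval 0) (cross heq)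
    simp only [eval_mul] at hc
    rw [(X_dvd_iff_eval _).mp h] at hc
    have hn : G.num.eval 0 = 0 := by
      have h0 : G.num.eval 0 * q.eval 0 = 0 := by rw [hc]; ring
      exact (mul_eq_zero.mp h0).resolve_right hq
    rw [← X_dvd_iff_eval] at hn
    exact Polynomial.not_isUnit_X ((G.isCoprime_num_denom).isUnit_of_dvd' hn h)
  · intro h
    by_contra hnd
    rw [X_dvd_iff_eval] at hnd
    exact h (G.num.eval 0 / G.denom.eval 0)
      ⟨G.num, G.denom, hnd, GdG G, by field_simp⟩

lemma dvd_sub_iff {G : RatFunc ℚ} : X ∣ (G.num - G.denom) ↔ Loc G 1 := by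
  rw [X_dvd_iff_eval, eval_sub, sub_eq_zero]
  constructor
  · intro h
    have hd : G.denom.eval 0 ≠ 0 := by
      intro h0
      have hn : X ∣ G.num := by rw [X_dvd_iff_eval, h, h0]
      have hdd : X ∣ G.denom := by rw [X_dvd_iff_eval]; exact h0
      exact Polynomial.not_isUnit_X ((G.isCoprime_num_denom).isUnit_of_dvd' hn hdd)
    exact ⟨G.num, G.denom, hd, GdG G, by rw [h]; ring⟩
  · rintro ⟨p, q, hq, heq, he⟩
    have hc := congrArg (Polynomial.eval 0) (cross heq)
    simp only [eval_mul] at hc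
    rw [he] at hc
    have h0 : (G.num.eval 0 - G.denom.eval 0) * q.eval 0 = 0 := by
      rw [sub_mul, hc]; ring
    have := (mul_eq_zero.mp h0).resolve_right hq
    linarith

-- invariant pieces
def A (m : ℕ) : Prop := ∃ c : ℚ, 2 ≤ c ∧ Loc (F m / RatFunc.X) c
def B (m : ℕ) : Prop := ∃ b : ℚ, b < 0 ∧ -1 ≤ 4 * b ∧ Loc (F m * RatFunc.X) b
def Cc (m : ℕ) : Prop := ∃ e : ℚ, 2 ≤ e ∧ Loc ((F m - 1) / RatFunc.X) e

lemma hX0 : (RatFunc.X : RatFunc ℚ) ≠ 0 := RatFunc.X_ne_zero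

lemma baseA : A 0 := by
  refine ⟨2, le_refl _, C 2, X + 1, by simp, ?_, by simp⟩
  have hq : ι (X + 1) ≠ 0 := RatFunc.algebraMap_ne_zero (by
    intro h; have := congrArg (Polynomial.eval 0) h; simp at this)
  show (2 * RatFunc.X) / (RatFunc.X + 1) / RatFunc.X * ι (X + 1) = ι (C 2)
  have h1 : ι (X + 1) = RatFunc.X + 1 := by
    simp [map_add, RatFunc.algebraMap_X]
  have h2 : (ι (C 2) : RatFunc ℚ) = 2 := by
    simp [RatFunc.algebraMap_C]
  rw [h1, h2]
  rw [h1] at hq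
  have hX : (RatFunc.X : RatFunc ℚ) ≠ 0 := RatFunc.X_ne_zero
  field_simp

lemma stepA {m : ℕ} (h : A m) : B (m + 1) := by
  obtain ⟨c, hc, p, q, hq, heq, he⟩ := h
  have hc0 : c ≠ 0 := by linarith
  have hp0 : p.eval 0 ≠ 0 := by rw [he]; exact mul_ne_zero hc0 hq
  have hp : (p : Polynomial ℚ) ≠ 0 := fun h => hp0 (by simp [h])
  have hqK : (ι q) ≠ 0 := RatFunc.algebraMap_ne_zero (fun h => hq (by simp [h]))
  have hpK : (ι p) ≠ 0 := RatFunc.algebraMap_ne_zero hp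
  have hFm : F m = RatFunc.X * ι p / ι q := by
    rw [eq_div_iff hqK]
    rw [div_mul_eq_mul_div, div_eq_iff hX0] at heq
    linear_combination heq
  have hFm0 : F m ≠ 0 := by
    rw [hFm]; exact div_ne_zero (mul_ne_zero hX0 hpK) hqK
  refine ⟨(1 - c) / c ^ 2, ?_, ?_, (p - q) * (X * p - q), p * p, ?_, ?_, ?_⟩
  · apply div_neg_of_neg_of_pos <;> [linarith; positivity]
  · have h2 : (0:ℚ) < c ^ 2 := by positivity
    have h4 : 4 * ((1 - c) / c ^ 2) = (4 * (1 - c)) / c ^ 2 := by ring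
    rw [h4, le_div_iff₀ h2]
    nlinarith [sq_nonneg (c - 2)]
  · simp only [eval_mul]; exact mul_ne_zero hp0 hp0
  · show ((F m - RatFunc.X) * (F m - 1)) / (F m) ^ 2 * RatFunc.X * ι (p * p)
      = ι ((p - q) * (X * p - q))
    rw [div_mul_eq_mul_div, div_mul_eq_mul_div, div_eq_iff (pow_ne_zero 2 hFm0), hFm]
    simp only [map_mul, map_sub, RatFunc.algebraMap_X]
    field_simp
  · simp only [eval_mul, eval_sub, eval_X, zero_mul]
    rw [he]; field_simp; ring

lemma stepB {m : ℕ} (h : B m) : Cc (m + 1) := by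
  obtain ⟨b, hb, hb4, p, q, hq, heq, he⟩ := h
  have hb0 : b ≠ 0 := ne_of_lt hb
  have hp0 : p.eval 0 ≠ 0 := by rw [he]; exact mul_ne_zero hb0 hq
  have hp : (p : Polynomial ℚ) ≠ 0 := fun h => hp0 (by simp [h])
  have hqK : (ι q) ≠ 0 := RatFunc.algebraMap_ne_zero (fun h => hq (by simp [h]))
  have hpK : (ι p) ≠ 0 := RatFunc.algebraMap_ne_zero hp
  have hFm : F m = ι p / (RatFunc.X * ι q) := by
    rw [eq_div_iff (mul_ne_zero hX0 hqK)]
    linear_combination heq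
  have hFm0 : F m ≠ 0 := by
    rw [hFm]; exact div_ne_zero hpK (mul_ne_zero hX0 hqK)
  refine ⟨-1 / b, ?_, (X ^ 2 * q - (X + 1) * p) * q, p * p, ?_, ?_, ?_⟩
  · rw [le_div_iff_of_neg hb]; nlinarith
  · simp only [eval_mul]; exact mul_ne_zero hp0 hp0
  · show (((F m - RatFunc.X) * (F m - 1)) / (F m) ^ 2 - 1) / RatFunc.X * ι (p * p)
      = ι ((X ^ 2 * q - (X + 1) * p) * q)
    rw [div_mul_eq_mul_div, div_eq_iff hX0, hFm]
    simp only [map_mul, map_sub, map_add, map_pow, RatFunc.algebraMap_X]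
    have hX : (RatFunc.X : RatFunc ℚ) ≠ 0 := RatFunc.X_ne_zero
    field_simp
    rw [map_one]; ring
  · simp only [eval_mul, eval_sub, eval_add, eval_pow, eval_X, eval_one]
    rw [he]; field_simp; ring

lemma stepC {m : ℕ} (h : Cc m) : A (m + 1) := by
  obtain ⟨e, he2, p, q, hq, heq, he⟩ := h
  have hqK : (ι q) ≠ 0 := RatFunc.algebraMap_ne_zero (fun h => hq (by simp [h]))
  have hr0 : (q + X * p).eval 0 ≠ 0 := by
    simpa using hq
  have hr : (q + X * p : Polynomial ℚ) ≠ 0 := fun h => hr0 (by simp [h])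
  have hrK : (ι (q + X * p)) ≠ 0 := RatFunc.algebraMap_ne_zero hr
  have hFm : F m = ι (q + X * p) / ι q := by
    rw [eq_div_iff hqK]
    rw [div_mul_eq_mul_div, div_eq_iff hX0] at heq
    simp only [map_add, map_mul, RatFunc.algebraMap_X]
    linear_combination heq
  have hFm0 : F m ≠ 0 := by
    rw [hFm]; exact div_ne_zero hrK hqK
  refine ⟨e, he2, (q + X * (p - q)) * p, (q + X * p) ^ 2, ?_, ?_, ?_⟩
  · simp only [eval_pow, eval_add, eval_mul, eval_X, zero_mul, add_zero]
    positivity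
  · show ((F m - RatFunc.X) * (F m - 1)) / (F m) ^ 2 / RatFunc.X * ι ((q + X * p) ^ 2)
      = ι ((q + X * (p - q)) * p)
    rw [div_div, div_mul_eq_mul_div, div_eq_iff (mul_ne_zero (pow_ne_zero 2 hFm0) hX0), hFm]
    simp only [map_mul, map_sub, map_add, map_pow, RatFunc.algebraMap_X]
    field_simp
    ring
  · simp only [eval_mul, eval_pow, eval_add, eval_sub, eval_X, zero_mul, add_zero]
    rw [he]; ring

lemma key_s3 (m : ℕ) : (m % 3 = 0 → A m) ∧ (m % 3 = 1 → B m) ∧ (m % 3 = 2 → Cc m) := by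
  induction m with
  | zero => exact ⟨fun _ => baseA, by omega, by omega⟩
  | succ n ih =>
    obtain ⟨hA, hB, hC⟩ := ih
    refine ⟨fun h => ?_, fun h => ?_, fun h => ?_⟩
    · exact stepC (hC (by omega))
    · exact stepA (hA (by omega))
    · exact stepB (hB (by omega))

theorem X_dvd_F_num_denom (m : ℕ) :
    (Polynomial.X ∣ (F m).num ↔ m % 3 = 0) ∧
    (Polynomial.X ∣ (F m).denom ↔ m % 3 = 1) ∧
    (Polynomial.X ∣ ((F m).num - (F m).denom) ↔ m % 3 = 2) := by
  obtain ⟨hA, hB, hC⟩ := key_s3 m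
  have h3 : m % 3 = 0 ∨ m % 3 = 1 ∨ m % 3 = 2 := by omega
  rcases h3 with h | h | h
  · obtain ⟨c, _, p, q, hq, heq, he⟩ := hA h
    have loc0 : Loc (F m) 0 := by
      refine ⟨X * p, q, hq, ?_, by simp⟩
      rw [div_mul_eq_mul_div, div_eq_iff hX0] at heq
      simp only [map_mul, RatFunc.algebraMap_X]
      linear_combination heq
    refine ⟨by rw [dvd_num_iff]; simp [h, loc0], ?_, ?_⟩
    · rw [dvd_denom_iff]
      simp only [h]
      constructor
      · intro hall; exact absurd loc0 (hall 0)
      · omega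
    · rw [dvd_sub_iff]
      simp only [h]
      constructor
      · intro loc1; exact absurd (loc_unique loc0 loc1) (by norm_num)
      · omega
  · obtain ⟨b, hb, _, p, q, hq, heq, he⟩ := hB h
    have hnone : ∀ v, ¬ Loc (F m) v := by
      rintro v ⟨p', q', hq', heq', he'⟩
      have locX : Loc (F m * RatFunc.X) 0 := by
        refine ⟨X * p', q', hq', ?_, by simp⟩
        rw [map_mul, RatFunc.algebraMap_X, ← heq']; ring
      have : b = 0 := loc_unique ⟨p, q, hq, heq, he⟩ locX
      exact absurd this (ne_of_lt hb)
    refine ⟨?_, by rw [dvd_denom_iff]; simp [h, hnone], ?_⟩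
    · rw [dvd_num_iff]
      simp only [h]
      constructor
      · intro loc0; exact absurd loc0 (hnone 0)
      · omega
    · rw [dvd_sub_iff]
      simp only [h]
      constructor
      · intro loc1; exact absurd loc1 (hnone 1)
      · omega
  · obtain ⟨e, _, p, q, hq, heq, he⟩ := hC h
    have loc1 : Loc (F m) 1 := by
      refine ⟨X * p + q, q, hq, ?_, by simp⟩
      rw [div_mul_eq_mul_div, div_eq_iff hX0] at heq
      simp only [map_add, map_mul, RatFunc.algebraMap_X]
      linear_combination heq
    refine ⟨?_, ?_, by rw [dvd_sub_iff]; simp [h, loc1]⟩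
    · rw [dvd_num_iff]
      simp only [h]
      constructor
      · intro loc0; exact absurd (loc_unique loc0 loc1) (by norm_num)
      · omega
    · rw [dvd_denom_iff]
      simp only [h]
      constructor
      · intro hall; exact absurd loc1 (hall 1)
      · omega
end

section
/- For every m : ℕ, natDegree((F (m+1)).num) = 2·natDegree((F m).num) + δ(m), as an identity in ℤ, where δ(m) = 0 if m ≡ 0, 1 or 5 (mod 6), δ(m) = −1 if m ≡ 3 (mod 6), and δ(m) = 1 if m ≡ 2 or 4 (mod 6). -/
open Polynomial

namespace FAux

/-! ### Generic helpers -/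

lemma copAddMul {x y : ℚ[X]} (h : IsCoprime x y) (z : ℚ[X]) : IsCoprime (x + y * z) y := by
  obtain ⟨a, b, hab⟩ := h
  exact ⟨a, b - a * z, by linear_combination hab⟩

lemma isCoprime_X_of {f : ℚ[X]} (h : f.eval 0 ≠ 0) : IsCoprime (X : ℚ[X]) f :=
  Polynomial.prime_X.coprime_iff_not_dvd.mpr
    (by rw [Polynomial.X_dvd_iff, Polynomial.coeff_zero_eq_eval_zero]; exact h)

lemma natDeg_lc {f : ℚ[X]} {n : ℕ} (h1 : f.natDegree ≤ n) (h2 : f.coeff n ≠ 0) :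
    f.natDegree = n ∧ f.leadingCoeff = f.coeff n := by
  have hd : f.natDegree = n := le_antisymm h1 (le_natDegree_of_ne_zero h2)
  exact ⟨hd, by rw [Polynomial.leadingCoeff, hd]⟩

lemma num_denom_unique {x : RatFunc ℚ} {p q : ℚ[X]} (hq : q.Monic) (hcop : IsCoprime p q)
    (hx : x = algebraMap ℚ[X] (RatFunc ℚ) p / algebraMap _ _ q) :
    x.num = p ∧ x.denom = q := by
  have key : x.num * q = p * x.denom := (RatFunc.num_mul_eq_mul_denom_iff hq.ne_zero).mpr hx
  have h1 : x.denom ∣ q := by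
    refine (RatFunc.isCoprime_num_denom x).symm.dvd_of_dvd_mul_left ?_
    exact ⟨p, by linear_combination key⟩
  have h2 : q ∣ x.denom := by
    refine hcop.symm.dvd_of_dvd_mul_left ?_
    exact ⟨x.num, by linear_combination -key⟩
  have hdenom : x.denom = q :=
    Polynomial.eq_of_monic_of_associated (RatFunc.monic_denom x) hq (associated_of_dvd_dvd h1 h2)
  refine ⟨?_, hdenom⟩
  have h3 := key
  rw [hdenom] at h3
  exact mul_right_cancel₀ hq.ne_zero h3

lemma field_aux {K : Type*} [Field K] {p q t : K} (hq : q ≠ 0) (hp : p ≠ 0) :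
    ((p / q - t) * (p / q - 1)) / (p / q) ^ 2 = ((p - t * q) * (p - q)) / p ^ 2 := by
  field_simp

lemma F_succ_eq (m : ℕ) (h : F m ≠ 0) :
    F (m + 1) = algebraMap ℚ[X] (RatFunc ℚ)
        (((F m).num - X * (F m).denom) * ((F m).num - (F m).denom))
      / algebraMap ℚ[X] (RatFunc ℚ) ((F m).num ^ 2) := by
  have hp : (F m).num ≠ 0 := RatFunc.num_ne_zero h
  have hq : (F m).denom ≠ 0 := (F m).denom_ne_zero
  have hp' := RatFunc.algebraMap_ne_zero hp
  have hq' := RatFunc.algebraMap_ne_zero hq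
  have hx : F m = algebraMap ℚ[X] (RatFunc ℚ) (F m).num / algebraMap _ _ (F m).denom :=
    (RatFunc.num_div_denom (F m)).symm
  show ((F m - RatFunc.X) * (F m - 1)) / (F m) ^ 2 = _
  rw [map_mul, map_sub, map_sub, map_pow, map_mul, RatFunc.algebraMap_X]
  conv_lhs => rw [hx]
  exact field_aux hq' hp'

lemma div_scale {P1 Q1 : ℚ[X]} {c : ℚ} (hc : c ≠ 0) :
    algebraMap ℚ[X] (RatFunc ℚ) P1 / algebraMap _ _ Q1
      = algebraMap ℚ[X] (RatFunc ℚ) (P1 * C c) / algebraMap _ _ (Q1 * C c) := by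
  have h : algebraMap ℚ[X] (RatFunc ℚ) (C c) ≠ 0 :=
    RatFunc.algebraMap_ne_zero (by simpa using hc)
  rw [map_mul, map_mul, mul_div_mul_right _ _ h]

lemma div_cancel_X {P1 Q1 : ℚ[X]} :
    algebraMap ℚ[X] (RatFunc ℚ) (X * P1) / algebraMap _ _ (X * Q1)
      = algebraMap ℚ[X] (RatFunc ℚ) P1 / algebraMap _ _ Q1 := by
  have h : algebraMap ℚ[X] (RatFunc ℚ) X ≠ 0 := RatFunc.algebraMap_ne_zero X_ne_zero
  rw [map_mul, map_mul, mul_div_mul_left _ _ h]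

/-! ### Degree helpers -/

lemma degs_same {p q : ℚ[X]} (hd : p.natDegree = q.natDegree)
    (hne : p.leadingCoeff ≠ q.leadingCoeff) :
    (p - q).natDegree = p.natDegree ∧ (p - q).leadingCoeff = p.leadingCoeff - q.leadingCoeff := by
  have hb : (p - q).natDegree ≤ p.natDegree :=
    (natDegree_sub_le p q).trans (by rw [hd]; simp)
  have hco : (p - q).coeff p.natDegree = p.leadingCoeff - q.leadingCoeff := by
    rw [coeff_sub, Polynomial.leadingCoeff, Polynomial.leadingCoeff, hd]
  have h := natDeg_lc hb (by rw [hco]; exact sub_ne_zero.mpr hne)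
  exact ⟨h.1, by rw [h.2, hco]⟩

lemma degs_lt {p q : ℚ[X]} (hd : q.natDegree < p.natDegree) :
    (p - q).natDegree = p.natDegree ∧ (p - q).leadingCoeff = p.leadingCoeff := by
  have hb : (p - q).natDegree ≤ p.natDegree :=
    (natDegree_sub_le p q).trans (max_le le_rfl hd.le)
  have hco : (p - q).coeff p.natDegree = p.leadingCoeff := by
    rw [coeff_sub, coeff_eq_zero_of_natDegree_lt hd, sub_zero, Polynomial.leadingCoeff]
  have hp : p ≠ 0 := by
    intro h
    rw [h, natDegree_zero] at hd
    omega
  have h := natDeg_lc hb (by rw [hco]; exact leadingCoeff_ne_zero.mpr hp)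
  exact ⟨h.1, by rw [h.2, hco]⟩

lemma degs_gt {p q : ℚ[X]} (hd : p.natDegree < q.natDegree) :
    (p - q).natDegree = q.natDegree ∧ (p - q).leadingCoeff = -q.leadingCoeff := by
  have h := degs_lt hd
  rw [show q - p = -(p - q) by ring, natDegree_neg, leadingCoeff_neg] at h
  exact ⟨h.1, by rw [← h.2]; ring⟩

lemma Xmul_facts {q : ℚ[X]} (hq : q ≠ 0) :
    (X * q).natDegree = q.natDegree + 1 ∧ (X * q).leadingCoeff = q.leadingCoeff := by
  constructor
  · rw [natDegree_mul X_ne_zero hq, natDegree_X]; omega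
  · rw [leadingCoeff_mul, leadingCoeff_X, one_mul]

lemma ineq_neg {t : ℚ} (h : t < 0) : 1 < (t - 1) * t * (t^2)⁻¹ := by
  have ht : t ≠ 0 := ne_of_lt h
  have he : (t - 1) * t * (t^2)⁻¹ = 1 - t⁻¹ := by field_simp
  rw [he]
  have : t⁻¹ < 0 := inv_neg''.mpr h
  linarith

lemma degsD_hi {p q : ℚ[X]} (hq : q.Monic) (hd : p.natDegree = q.natDegree + 1)
    (hlc : p.leadingCoeff < 0) :
    (p - X*q).natDegree = p.natDegree ∧ (p - X*q).leadingCoeff = p.leadingCoeff - 1 ∧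
    (p - q).natDegree = p.natDegree ∧ (p - q).leadingCoeff = p.leadingCoeff := by
  have hX := Xmul_facts hq.ne_zero
  have h1 := degs_same (p := p) (q := X*q)
    (by rw [hX.1, hd]) (by rw [hX.2, hq.leadingCoeff]; linarith)
  have h2 := degs_lt (p := p) (q := q) (by omega)
  exact ⟨h1.1, by rw [h1.2, hX.2, hq.leadingCoeff], h2.1, h2.2⟩

lemma degsD_lo {p q : ℚ[X]} (hq : q.Monic) (hd : p.natDegree = q.natDegree)
    (hlc : 1 < p.leadingCoeff) :
    (p - X*q).natDegree = p.natDegree + 1 ∧ (p - X*q).leadingCoeff = -1 ∧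
    (p - q).natDegree = p.natDegree ∧ (p - q).leadingCoeff = p.leadingCoeff - 1 := by
  have hX := Xmul_facts hq.ne_zero
  have h1 := degs_gt (p := p) (q := X*q) (by omega)
  have h2 := degs_same (p := p) (q := q) hd (by rw [hq.leadingCoeff]; linarith)
  refine ⟨by rw [h1.1, hX.1, hd], by rw [h1.2, hX.2, hq.leadingCoeff], h2.1, ?_⟩
  rw [h2.2, hq.leadingCoeff]

/-! ### The shape invariants -/

def ShA (p q : ℚ[X]) : Prop :=
  q.eval 0 ≠ 0 ∧ ∃ u, p = X * u ∧ u.eval 0 ≠ 0 ∧ u.eval 0 ≠ q.eval 0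

def ShB (p q : ℚ[X]) : Prop :=
  p.eval 0 ≠ 0 ∧ ∃ r, q = X * r ∧ r.eval 0 ≠ 0 ∧ p.eval 0 + r.eval 0 ≠ 0

def ShC (p q : ℚ[X]) : Prop :=
  p.eval 0 ≠ 0 ∧ p.eval 0 = q.eval 0 ∧
    ∃ w, p - q = X * w ∧ w.eval 0 ≠ 0 ∧ w.eval 0 ≠ p.eval 0

lemma ShA.ne_zero {p q : ℚ[X]} (h : ShA p q) : p ≠ 0 := by
  obtain ⟨-, u, hu, hu0, -⟩ := h
  intro h0
  rw [h0] at hu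
  exact hu0 (by rw [show u = 0 from by
    rcases mul_eq_zero.mp hu.symm with h | h
    · exact absurd h X_ne_zero
    · exact h]; simp)

lemma ShB.ne_zero {p q : ℚ[X]} (h : ShB p q) : p ≠ 0 :=
  fun h0 => h.1 (by rw [h0]; simp)

lemma ShC.ne_zero {p q : ℚ[X]} (h : ShC p q) : p ≠ 0 :=
  fun h0 => h.1 (by rw [h0]; simp)

/-! ### Shape B core -/

lemma coreB {p q : ℚ[X]} (hcop : IsCoprime p q) (hB : ShB p q) :
    ((p^2) * C ((p^2).leadingCoeff)⁻¹).Monic ∧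
    IsCoprime ((p - X*q)*(p - q) * C ((p^2).leadingCoeff)⁻¹) ((p^2) * C ((p^2).leadingCoeff)⁻¹) ∧
    (algebraMap ℚ[X] (RatFunc ℚ) ((p - X*q)*(p - q)) / algebraMap _ _ (p^2)
      = algebraMap ℚ[X] (RatFunc ℚ) ((p - X*q)*(p - q) * C ((p^2).leadingCoeff)⁻¹)
        / algebraMap _ _ ((p^2) * C ((p^2).leadingCoeff)⁻¹)) ∧
    ShC ((p - X*q)*(p - q) * C ((p^2).leadingCoeff)⁻¹) ((p^2) * C ((p^2).leadingCoeff)⁻¹) := by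
  obtain ⟨hp0, r, hqr, hr0, hpr⟩ := hB
  have hp : p ≠ 0 := fun h => hp0 (by rw [h]; simp)
  have hp2 : p^2 ≠ 0 := pow_ne_zero 2 hp
  set c : ℚ := ((p^2).leadingCoeff)⁻¹ with hcdef
  have hc0 : c ≠ 0 := inv_ne_zero (leadingCoeff_ne_zero.mpr hp2)
  have hq0 : q.eval 0 = 0 := by rw [hqr]; simp
  have hXp : IsCoprime (X : ℚ[X]) p := isCoprime_X_of hp0
  have hqp : IsCoprime q p := hcop.symm
  have c1 : IsCoprime (p - X*q) p := by
    have h := copAddMul ((hXp.mul_left hqp).neg_left) 1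
    rwa [show -(X*q) + p*1 = p - X*q by ring] at h
  have c2 : IsCoprime (p - q) p := by
    have h := copAddMul (hqp.neg_left) 1
    rwa [show -q + p*1 = p - q by ring] at h
  have ctop : IsCoprime ((p - X*q)*(p - q)) (p^2) := (c1.mul_left c2).pow_right
  have hunit : IsUnit (C c : ℚ[X]) := Polynomial.isUnit_C.mpr hc0.isUnit
  refine ⟨monic_mul_leadingCoeff_inv hp2, (isCoprime_mul_unit_right hunit _ _).mpr ctop,
    div_scale hc0, ?_, ?_, ?_⟩
  · simp only [eval_mul, eval_sub, eval_X, eval_C, hq0]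
    simp [hp0, hc0]
  · simp only [eval_mul, eval_sub, eval_pow, eval_X, eval_C, hq0]
    ring
  · refine ⟨r*(X^2*r - p - X*p) * C c, by rw [hqr]; ring, ?_, ?_⟩
    · have h : (r*(X^2*r - p - X*p) * C c).eval 0 = -(r.eval 0 * p.eval 0 * c) := by
        simp
      rw [h]
      exact neg_ne_zero.mpr (mul_ne_zero (mul_ne_zero hr0 hp0) hc0)
    · have h1 : (r*(X^2*r - p - X*p) * C c).eval 0 = -(r.eval 0 * p.eval 0 * c) := by
        simp
      have h2 : ((p - X*q)*(p - q) * C c).eval 0 = p.eval 0 * p.eval 0 * c := by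
        simp only [eval_mul, eval_sub, eval_X, eval_C, hq0]
        ring
      rw [h1, h2]
      intro heq
      have h3 : p.eval 0 * ((p.eval 0 + r.eval 0) * c) = 0 := by linear_combination -heq
      rcases mul_eq_zero.mp h3 with h | h
      · exact hp0 h
      · rcases mul_eq_zero.mp h with h | h
        · exact hpr h
        · exact hc0 h

/-! ### Shape C core -/

lemma coreC {p q : ℚ[X]} (hcop : IsCoprime p q) (hC : ShC p q) :
    ((p^2) * C ((p^2).leadingCoeff)⁻¹).Monic ∧
    IsCoprime ((p - X*q)*(p - q) * C ((p^2).leadingCoeff)⁻¹) ((p^2) * C ((p^2).leadingCoeff)⁻¹) ∧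
    (algebraMap ℚ[X] (RatFunc ℚ) ((p - X*q)*(p - q)) / algebraMap _ _ (p^2)
      = algebraMap ℚ[X] (RatFunc ℚ) ((p - X*q)*(p - q) * C ((p^2).leadingCoeff)⁻¹)
        / algebraMap _ _ ((p^2) * C ((p^2).leadingCoeff)⁻¹)) ∧
    ShA ((p - X*q)*(p - q) * C ((p^2).leadingCoeff)⁻¹) ((p^2) * C ((p^2).leadingCoeff)⁻¹) := by
  obtain ⟨hp0, hpq0, w, hw, hw0, hwp⟩ := hC
  have hq0 : q.eval 0 ≠ 0 := by rw [← hpq0]; exact hp0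
  have hp : p ≠ 0 := fun h => hp0 (by rw [h]; simp)
  have hp2 : p^2 ≠ 0 := pow_ne_zero 2 hp
  set c : ℚ := ((p^2).leadingCoeff)⁻¹ with hcdef
  have hc0 : c ≠ 0 := inv_ne_zero (leadingCoeff_ne_zero.mpr hp2)
  have hXp : IsCoprime (X : ℚ[X]) p := isCoprime_X_of hp0
  have hqp : IsCoprime q p := hcop.symm
  have c1 : IsCoprime (p - X*q) p := by
    have h := copAddMul ((hXp.mul_left hqp).neg_left) 1
    rwa [show -(X*q) + p*1 = p - X*q by ring] at h
  have c2 : IsCoprime (p - q) p := by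
    have h := copAddMul (hqp.neg_left) 1
    rwa [show -q + p*1 = p - q by ring] at h
  have ctop : IsCoprime ((p - X*q)*(p - q)) (p^2) := (c1.mul_left c2).pow_right
  have hunit : IsUnit (C c : ℚ[X]) := Polynomial.isUnit_C.mpr hc0.isUnit
  refine ⟨monic_mul_leadingCoeff_inv hp2, (isCoprime_mul_unit_right hunit _ _).mpr ctop,
    div_scale hc0, ?_, ?_⟩
  · -- q'.eval 0 ≠ 0
    simp only [eval_mul, eval_pow, eval_C]
    exact mul_ne_zero (pow_ne_zero 2 hp0) hc0
  · -- ∃ u', p' = X * u'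
    refine ⟨(p - X*q) * w * C c, by rw [hw]; ring, ?_, ?_⟩
    · have h : ((p - X*q) * w * C c).eval 0 = p.eval 0 * w.eval 0 * c := by
        simp only [eval_mul, eval_sub, eval_X, eval_C]
        ring
      rw [h]
      exact mul_ne_zero (mul_ne_zero hp0 hw0) hc0
    · have h1 : ((p - X*q) * w * C c).eval 0 = p.eval 0 * w.eval 0 * c := by
        simp only [eval_mul, eval_sub, eval_X, eval_C]
        ring
      have h2 : ((p^2) * C c).eval 0 = p.eval 0 * p.eval 0 * c := by
        simp only [eval_mul, eval_pow, eval_C]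
        ring
      rw [h1, h2]
      intro heq
      have h3 : p.eval 0 * ((w.eval 0 - p.eval 0) * c) = 0 := by linear_combination heq
      rcases mul_eq_zero.mp h3 with h | h
      · exact hp0 h
      · rcases mul_eq_zero.mp h with h | h
        · exact hwp (by linarith [sub_eq_zero.mp h])
        · exact hc0 h

/-! ### Shape A core -/

lemma coreA {p q : ℚ[X]} (hcop : IsCoprime p q) (hA : ShA p q) {u : ℚ[X]}
    (hu : p = X * u) (hu0 : u.eval 0 ≠ 0) (huq : u.eval 0 ≠ q.eval 0) :
    ((X*u^2) * C (((X*u^2)).leadingCoeff)⁻¹).Monic ∧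
    IsCoprime ((u - q)*(p - q) * C ((X*u^2).leadingCoeff)⁻¹) ((X*u^2) * C ((X*u^2).leadingCoeff)⁻¹) ∧
    (algebraMap ℚ[X] (RatFunc ℚ) ((p - X*q)*(p - q)) / algebraMap _ _ (p^2)
      = algebraMap ℚ[X] (RatFunc ℚ) ((u - q)*(p - q) * C ((X*u^2).leadingCoeff)⁻¹)
        / algebraMap _ _ ((X*u^2) * C ((X*u^2).leadingCoeff)⁻¹)) ∧
    ShB ((u - q)*(p - q) * C ((X*u^2).leadingCoeff)⁻¹) ((X*u^2) * C ((X*u^2).leadingCoeff)⁻¹) := by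
  obtain ⟨hq0, -⟩ := hA
  have hun : u ≠ 0 := fun h => hu0 (by rw [h]; simp)
  have hQ1 : (X*u^2 : ℚ[X]) ≠ 0 := mul_ne_zero X_ne_zero (pow_ne_zero 2 hun)
  set c : ℚ := ((X*u^2).leadingCoeff)⁻¹ with hcdef
  have hc0 : c ≠ 0 := inv_ne_zero (leadingCoeff_ne_zero.mpr hQ1)
  have hp00 : p.eval 0 = 0 := by rw [hu]; simp
  -- coprimality
  have hXuq : IsCoprime (X*u) q := by rw [← hu]; exact hcop
  have huq' : IsCoprime q u := (hXuq.of_mul_left_right).symm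
  have c1 : IsCoprime (u - q) X := by
    refine (isCoprime_X_of ?_).symm
    simp only [eval_sub]
    exact sub_ne_zero.mpr huq
  have c2 : IsCoprime (u - q) u := by
    have h := copAddMul (huq'.neg_left) 1
    rwa [show -q + u*1 = u - q by ring] at h
  have c3 : IsCoprime (p - q) X := by
    refine (isCoprime_X_of ?_).symm
    simp only [eval_sub, hp00, zero_sub]
    exact neg_ne_zero.mpr hq0
  have c4 : IsCoprime (p - q) u := by
    have h := copAddMul (huq'.neg_left) X
    rwa [show -q + u*X = p - q by rw [hu]; ring] at h
  have ctop : IsCoprime ((u - q)*(p - q)) (X*u^2) :=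
    (c1.mul_left c3).mul_right ((c2.mul_left c4).pow_right)
  have hunit : IsUnit (C c : ℚ[X]) := Polynomial.isUnit_C.mpr hc0.isUnit
  have heq1 : (p - X*q)*(p - q) = X * ((u - q)*(p - q)) := by rw [hu]; ring
  have heq2 : p^2 = X * (X*u^2) := by rw [hu]; ring
  refine ⟨monic_mul_leadingCoeff_inv hQ1, (isCoprime_mul_unit_right hunit _ _).mpr ctop,
    ?_, ?_, ?_⟩
  · rw [heq1, heq2, div_cancel_X]
    exact div_scale hc0
  · -- p'.eval 0 ≠ 0
    have h : ((u - q)*(p - q) * C c).eval 0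
        = (u.eval 0 - q.eval 0) * (0 - q.eval 0) * c := by
      simp only [eval_mul, eval_sub, eval_C, hp00]
    rw [h]
    exact mul_ne_zero (mul_ne_zero (sub_ne_zero.mpr huq)
      (by rw [zero_sub]; exact neg_ne_zero.mpr hq0)) hc0
  · -- ∃ r', q' = X * r'
    refine ⟨u^2 * C c, by ring, ?_, ?_⟩
    · simp only [eval_mul, eval_pow, eval_C]
      exact mul_ne_zero (pow_ne_zero 2 hu0) hc0
    · have h1 : ((u - q)*(p - q) * C c).eval 0
          = (u.eval 0 - q.eval 0) * (0 - q.eval 0) * c := by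
        simp only [eval_mul, eval_sub, eval_C, hp00]
      have h2 : (u^2 * C c).eval 0 = u.eval 0 ^ 2 * c := by
        simp only [eval_mul, eval_pow, eval_C]
      rw [h1, h2]
      intro heq
      have hpos : 0 < u.eval 0 ^ 2 - u.eval 0 * q.eval 0 + q.eval 0 ^ 2 := by
        nlinarith [sq_nonneg (u.eval 0 - q.eval 0), sq_nonneg (u.eval 0),
          pow_two_pos_of_ne_zero hq0]
      have h3 : (u.eval 0 ^ 2 - u.eval 0 * q.eval 0 + q.eval 0 ^ 2) * c = 0 := by
        linear_combination heq
      rcases mul_eq_zero.mp h3 with h | h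
      · exact absurd h (ne_of_gt hpos)
      · exact hc0 h


/-! ### Degree conclusions for shape B/C steps (p' = top*Cc, q' = p²*Cc) -/

lemma degreeOut_hi {p q : ℚ[X]} (hq : q.Monic) (hp : p ≠ 0)
    (hd : p.natDegree = q.natDegree + 1) (hlc : p.leadingCoeff < 0) :
    ((p - X*q)*(p - q) * C ((p^2).leadingCoeff)⁻¹).natDegree
      = ((p^2) * C ((p^2).leadingCoeff)⁻¹).natDegree ∧
    1 < ((p - X*q)*(p - q) * C ((p^2).leadingCoeff)⁻¹).leadingCoeff ∧
    (((p - X*q)*(p - q) * C ((p^2).leadingCoeff)⁻¹).natDegree : ℤ) = 2 * (p.natDegree : ℤ) := by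
  have hp2 : p^2 ≠ 0 := pow_ne_zero 2 hp
  have hlcp : p.leadingCoeff ≠ 0 := leadingCoeff_ne_zero.mpr hp
  have hc0 : ((p^2).leadingCoeff)⁻¹ ≠ 0 := inv_ne_zero (leadingCoeff_ne_zero.mpr hp2)
  obtain ⟨e1, l1, e2, l2⟩ := degsD_hi hq hd hlc
  have hn1 : (p - X*q) ≠ 0 :=
    leadingCoeff_ne_zero.mp (by rw [l1]; exact sub_ne_zero.mpr (by linarith))
  have hn2 : (p - q) ≠ 0 := leadingCoeff_ne_zero.mp (by rw [l2]; exact hlcp)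
  have lctop : ((p - X*q)*(p - q)).leadingCoeff = (p.leadingCoeff - 1) * p.leadingCoeff := by
    rw [leadingCoeff_mul, l1, l2]
  have lctopne : ((p - X*q)*(p - q)).leadingCoeff ≠ 0 := by
    rw [lctop]; exact mul_ne_zero (sub_ne_zero.mpr (by linarith)) hlcp
  have ndp' : ((p - X*q)*(p - q) * C ((p^2).leadingCoeff)⁻¹).natDegree
      = p.natDegree + p.natDegree := by
    rw [natDegree_mul_C_eq_of_mul_ne_zero (mul_ne_zero lctopne hc0),
      natDegree_mul hn1 hn2, e1, e2]
  have ndq' : ((p^2) * C ((p^2).leadingCoeff)⁻¹).natDegree = 2 * p.natDegree := by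
    rw [natDegree_mul_C_eq_of_mul_ne_zero
      (mul_ne_zero (leadingCoeff_ne_zero.mpr hp2) hc0), natDegree_pow]
  refine ⟨by omega, ?_, by rw [ndp']; push_cast; ring⟩
  have lcp' : ((p - X*q)*(p - q) * C ((p^2).leadingCoeff)⁻¹).leadingCoeff
      = (p.leadingCoeff - 1) * p.leadingCoeff * (p.leadingCoeff^2)⁻¹ := by
    rw [leadingCoeff_mul, leadingCoeff_C, lctop, leadingCoeff_pow]
  rw [lcp']
  exact ineq_neg hlc

lemma degreeOut_lo {p q : ℚ[X]} (hq : q.Monic) (hp : p ≠ 0)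
    (hd : p.natDegree = q.natDegree) (hlc : 1 < p.leadingCoeff) :
    ((p - X*q)*(p - q) * C ((p^2).leadingCoeff)⁻¹).natDegree
      = ((p^2) * C ((p^2).leadingCoeff)⁻¹).natDegree + 1 ∧
    ((p - X*q)*(p - q) * C ((p^2).leadingCoeff)⁻¹).leadingCoeff < 0 ∧
    (((p - X*q)*(p - q) * C ((p^2).leadingCoeff)⁻¹).natDegree : ℤ)
      = 2 * (p.natDegree : ℤ) + 1 := by
  have hp2 : p^2 ≠ 0 := pow_ne_zero 2 hp
  have hlcp : p.leadingCoeff ≠ 0 := leadingCoeff_ne_zero.mpr hp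
  have hc0 : ((p^2).leadingCoeff)⁻¹ ≠ 0 := inv_ne_zero (leadingCoeff_ne_zero.mpr hp2)
  obtain ⟨e1, l1, e2, l2⟩ := degsD_lo hq hd hlc
  have hn1 : (p - X*q) ≠ 0 := leadingCoeff_ne_zero.mp (by rw [l1]; norm_num)
  have hn2 : (p - q) ≠ 0 :=
    leadingCoeff_ne_zero.mp (by rw [l2]; exact sub_ne_zero.mpr (by linarith))
  have lctop : ((p - X*q)*(p - q)).leadingCoeff = -1 * (p.leadingCoeff - 1) := by
    rw [leadingCoeff_mul, l1, l2]
  have lctopne : ((p - X*q)*(p - q)).leadingCoeff ≠ 0 := by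
    rw [lctop]
    exact mul_ne_zero (by norm_num) (sub_ne_zero.mpr (by linarith))
  have ndp' : ((p - X*q)*(p - q) * C ((p^2).leadingCoeff)⁻¹).natDegree
      = (p.natDegree + 1) + p.natDegree := by
    rw [natDegree_mul_C_eq_of_mul_ne_zero (mul_ne_zero lctopne hc0),
      natDegree_mul hn1 hn2, e1, e2]
  have ndq' : ((p^2) * C ((p^2).leadingCoeff)⁻¹).natDegree = 2 * p.natDegree := by
    rw [natDegree_mul_C_eq_of_mul_ne_zero
      (mul_ne_zero (leadingCoeff_ne_zero.mpr hp2) hc0), natDegree_pow]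
  refine ⟨by omega, ?_, by rw [ndp']; push_cast; ring⟩
  have lcp' : ((p - X*q)*(p - q) * C ((p^2).leadingCoeff)⁻¹).leadingCoeff
      = -1 * (p.leadingCoeff - 1) * (p.leadingCoeff^2)⁻¹ := by
    rw [leadingCoeff_mul, leadingCoeff_C, lctop, leadingCoeff_pow]
  rw [lcp']
  have h2 : (0:ℚ) < (p.leadingCoeff^2)⁻¹ := by positivity
  nlinarith

/-! ### Degree conclusions for shape A steps (p' = (u-q)(p-q)*Cc, q' = X*u²*Cc) -/

lemma degreeOutA_lo {p q u : ℚ[X]} (hq : q.Monic) (hu : p = X * u) (hun : u ≠ 0)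
    (hd : p.natDegree = q.natDegree) (hlc : 1 < p.leadingCoeff) :
    ((u - q)*(p - q) * C ((X*u^2).leadingCoeff)⁻¹).natDegree
      = ((X*u^2) * C ((X*u^2).leadingCoeff)⁻¹).natDegree + 1 ∧
    ((u - q)*(p - q) * C ((X*u^2).leadingCoeff)⁻¹).leadingCoeff < 0 ∧
    (((u - q)*(p - q) * C ((X*u^2).leadingCoeff)⁻¹).natDegree : ℤ) = 2 * (p.natDegree : ℤ) := by
  have hu2 : (u^2 : ℚ[X]) ≠ 0 := pow_ne_zero 2 hun
  have hQ1 : (X*u^2 : ℚ[X]) ≠ 0 := mul_ne_zero X_ne_zero hu2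
  have hc0 : ((X*u^2).leadingCoeff)⁻¹ ≠ 0 := inv_ne_zero (leadingCoeff_ne_zero.mpr hQ1)
  have hX := Xmul_facts hun
  have hdu : p.natDegree = u.natDegree + 1 := by rw [hu, hX.1]
  have hlcu : p.leadingCoeff = u.leadingCoeff := by rw [hu, hX.2]
  have h1 := degs_gt (p := u) (q := q) (by omega)
  have h2 := degs_same (p := p) (q := q) hd (by rw [hq.leadingCoeff]; linarith)
  have hn1 : (u - q) ≠ 0 := leadingCoeff_ne_zero.mp
    (by rw [h1.2, hq.leadingCoeff]; norm_num)
  have hn2 : (p - q) ≠ 0 := leadingCoeff_ne_zero.mp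
    (by rw [h2.2, hq.leadingCoeff]; exact sub_ne_zero.mpr (by linarith))
  have lctop : ((u - q)*(p - q)).leadingCoeff = -1 * (p.leadingCoeff - 1) := by
    rw [leadingCoeff_mul, h1.2, h2.2, hq.leadingCoeff]
  have lctopne : ((u - q)*(p - q)).leadingCoeff ≠ 0 := by
    rw [lctop]
    exact mul_ne_zero (by norm_num) (sub_ne_zero.mpr (by linarith))
  have lcQ1 : (X*u^2).leadingCoeff = p.leadingCoeff^2 := by
    rw [(Xmul_facts hu2).2, leadingCoeff_pow, hlcu]
  have ndp' : ((u - q)*(p - q) * C ((X*u^2).leadingCoeff)⁻¹).natDegree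
      = q.natDegree + p.natDegree := by
    rw [natDegree_mul_C_eq_of_mul_ne_zero (mul_ne_zero lctopne hc0),
      natDegree_mul hn1 hn2, h1.1, h2.1]
  have ndq' : ((X*u^2) * C ((X*u^2).leadingCoeff)⁻¹).natDegree = u.natDegree * 2 + 1 := by
    rw [natDegree_mul_C_eq_of_mul_ne_zero
      (mul_ne_zero (leadingCoeff_ne_zero.mpr hQ1) hc0), (Xmul_facts hu2).1, natDegree_pow]
    ring
  refine ⟨by omega, ?_, by rw [ndp']; push_cast; omega⟩
  have lcp' : ((u - q)*(p - q) * C ((X*u^2).leadingCoeff)⁻¹).leadingCoeff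
      = -1 * (p.leadingCoeff - 1) * (p.leadingCoeff^2)⁻¹ := by
    rw [leadingCoeff_mul, leadingCoeff_C, lctop, lcQ1]
  rw [lcp']
  have h3 : (0:ℚ) < (p.leadingCoeff^2)⁻¹ := by positivity
  nlinarith

lemma degreeOutA_hi {p q u : ℚ[X]} (hq : q.Monic) (hu : p = X * u) (hun : u ≠ 0)
    (hd : p.natDegree = q.natDegree + 1) (hlc : p.leadingCoeff < 0) :
    ((u - q)*(p - q) * C ((X*u^2).leadingCoeff)⁻¹).natDegree
      = ((X*u^2) * C ((X*u^2).leadingCoeff)⁻¹).natDegree ∧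
    1 < ((u - q)*(p - q) * C ((X*u^2).leadingCoeff)⁻¹).leadingCoeff ∧
    (((u - q)*(p - q) * C ((X*u^2).leadingCoeff)⁻¹).natDegree : ℤ)
      = 2 * (p.natDegree : ℤ) - 1 := by
  have hu2 : (u^2 : ℚ[X]) ≠ 0 := pow_ne_zero 2 hun
  have hQ1 : (X*u^2 : ℚ[X]) ≠ 0 := mul_ne_zero X_ne_zero hu2
  have hc0 : ((X*u^2).leadingCoeff)⁻¹ ≠ 0 := inv_ne_zero (leadingCoeff_ne_zero.mpr hQ1)
  have hX := Xmul_facts hun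
  have hdu : p.natDegree = u.natDegree + 1 := by rw [hu, hX.1]
  have hlcu : p.leadingCoeff = u.leadingCoeff := by rw [hu, hX.2]
  have h1 := degs_same (p := u) (q := q) (by omega)
    (by rw [hq.leadingCoeff, ← hlcu]; linarith)
  have h2 := degs_lt (p := p) (q := q) (by omega)
  have hn1 : (u - q) ≠ 0 := leadingCoeff_ne_zero.mp
    (by rw [h1.2, hq.leadingCoeff, ← hlcu]; exact sub_ne_zero.mpr (by linarith))
  have hn2 : (p - q) ≠ 0 := leadingCoeff_ne_zero.mp
    (by rw [h2.2]; exact leadingCoeff_ne_zero.mpr (by rw [hu]; exact mul_ne_zero X_ne_zero hun))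
  have lctop : ((u - q)*(p - q)).leadingCoeff = (p.leadingCoeff - 1) * p.leadingCoeff := by
    rw [leadingCoeff_mul, h1.2, h2.2, hq.leadingCoeff, ← hlcu]
  have lctopne : ((u - q)*(p - q)).leadingCoeff ≠ 0 := by
    rw [lctop]
    exact mul_ne_zero (sub_ne_zero.mpr (by linarith)) (by linarith)
  have lcQ1 : (X*u^2).leadingCoeff = p.leadingCoeff^2 := by
    rw [(Xmul_facts hu2).2, leadingCoeff_pow, hlcu]
  have ndp' : ((u - q)*(p - q) * C ((X*u^2).leadingCoeff)⁻¹).natDegree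
      = u.natDegree + p.natDegree := by
    rw [natDegree_mul_C_eq_of_mul_ne_zero (mul_ne_zero lctopne hc0),
      natDegree_mul hn1 hn2, h1.1, h2.1]
  have ndq' : ((X*u^2) * C ((X*u^2).leadingCoeff)⁻¹).natDegree = u.natDegree * 2 + 1 := by
    rw [natDegree_mul_C_eq_of_mul_ne_zero
      (mul_ne_zero (leadingCoeff_ne_zero.mpr hQ1) hc0), (Xmul_facts hu2).1, natDegree_pow]
    ring
  refine ⟨by omega, ?_, by rw [ndp']; push_cast; omega⟩
  have lcp' : ((u - q)*(p - q) * C ((X*u^2).leadingCoeff)⁻¹).leadingCoeff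
      = (p.leadingCoeff - 1) * p.leadingCoeff * (p.leadingCoeff^2)⁻¹ := by
    rw [leadingCoeff_mul, leadingCoeff_C, lctop, lcQ1]
  rw [lcp']
  exact ineq_neg hlc

lemma isCoprime_X_sub_C_of {a : ℚ} {f : ℚ[X]} (h : f.eval a ≠ 0) : IsCoprime (X - C a) f :=
  (Polynomial.irreducible_X_sub_C a).coprime_iff_not_dvd.mpr
    (mt Polynomial.dvd_iff_isRoot.mp h)

def Dlo (p q : ℚ[X]) : Prop := p.natDegree = q.natDegree ∧ 1 < p.leadingCoeff
def Dhi (p q : ℚ[X]) : Prop := p.natDegree = q.natDegree + 1 ∧ p.leadingCoeff < 0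

def InvAt : ℕ → ℚ[X] → ℚ[X] → Prop
  | 0, p, q => ShA p q ∧ Dlo p q
  | 1, p, q => ShB p q ∧ Dhi p q
  | 2, p, q => ShC p q ∧ Dlo p q
  | 3, p, q => ShA p q ∧ Dhi p q
  | 4, p, q => ShB p q ∧ Dlo p q
  | 5, p, q => ShC p q ∧ Dhi p q
  | _+6, _, _ => True

def Inv (m : ℕ) : Prop := InvAt (m % 6) (F m).num (F m).denom

lemma inv_zero : Inv 0 := by
  have hmon : (X + 1 : ℚ[X]).Monic := by simpa using monic_X_add_C (1:ℚ)
  have hcop : IsCoprime (2*X : ℚ[X]) (X + 1) := by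
    have h := isCoprime_X_sub_C_of (a := -1) (f := (2*X : ℚ[X])) (by simp)
    have h2 : (X - C (-1) : ℚ[X]) = X + 1 := by simp
    rw [h2] at h
    exact h.symm
  have h0 : F 0 = algebraMap ℚ[X] (RatFunc ℚ) (2*X) / algebraMap ℚ[X] (RatFunc ℚ) (X+1) := by
    show (2 * RatFunc.X) / (RatFunc.X + 1) = _
    rw [map_mul, map_add, map_one, RatFunc.algebraMap_X, map_ofNat]
  obtain ⟨hnum, hden⟩ := num_denom_unique hmon hcop h0
  show InvAt (0 % 6) (F 0).num (F 0).denom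
  rw [show (0 % 6 : ℕ) = 0 from rfl, hnum, hden]
  refine ⟨⟨by simp, 2, by ring, by norm_num, by norm_num⟩, ?_, ?_⟩
  · rw [show (2*X : ℚ[X]) = C 2 * X from by rw [map_ofNat], natDegree_C_mul_X _ (by norm_num),
      show (X+1 : ℚ[X]) = X + C 1 from by rw [map_one], natDegree_X_add_C]
  · rw [show (2*X : ℚ[X]) = C 2 * X from by rw [map_ofNat], leadingCoeff_C_mul_X]
    norm_num

lemma key (m : ℕ) (h : Inv m) : Inv (m+1) ∧ ((F (m+1)).num.natDegree : ℤ) =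
    2 * ((F m).num.natDegree : ℤ) +
      (if m % 6 = 3 then -1 else if m % 6 = 2 ∨ m % 6 = 4 then 1 else 0) := by
  have hmq := RatFunc.monic_denom (F m)
  have hcopm := RatFunc.isCoprime_num_denom (F m)
  unfold Inv at h
  have h6 : m % 6 = 0 ∨ m % 6 = 1 ∨ m % 6 = 2 ∨ m % 6 = 3 ∨ m % 6 = 4 ∨ m % 6 = 5 := by omega
  rcases h6 with hr | hr | hr | hr | hr | hr
  · -- class 0 : ShA, Dlo → ShB, Dhi, δ = 0
    rw [hr] at h
    obtain ⟨hsh, hdl⟩ := h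
    have hF : F m ≠ 0 := by
      intro h0; apply hsh.ne_zero; rw [h0]; exact RatFunc.num_zero
    obtain ⟨hq0, u, hu, hu0, huq⟩ := hsh
    have hun : u ≠ 0 := fun h0 => hu0 (by rw [h0]; simp)
    obtain ⟨hmon, hcop', heq, hshB⟩ := coreA hcopm ⟨hq0, u, hu, hu0, huq⟩ hu hu0 huq
    obtain ⟨d1, d2, d3⟩ := degreeOutA_lo hmq hu hun hdl.1 hdl.2
    obtain ⟨hnum, hden⟩ := num_denom_unique hmon hcop' ((F_succ_eq m hF).trans heq)
    have hr' : (m+1) % 6 = 1 := by omega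
    constructor
    · show InvAt ((m+1) % 6) _ _
      rw [hr', hnum, hden]
      exact ⟨hshB, d1, d2⟩
    · rw [hnum, d3, hr]
      norm_num
  · -- class 1 : ShB, Dhi → ShC, Dlo, δ = 0
    rw [hr] at h
    obtain ⟨hsh, hdl⟩ := h
    have hF : F m ≠ 0 := by
      intro h0; apply hsh.ne_zero; rw [h0]; exact RatFunc.num_zero
    obtain ⟨hmon, hcop', heq, hshC⟩ := coreB hcopm hsh
    obtain ⟨d1, d2, d3⟩ := degreeOut_hi hmq hsh.ne_zero hdl.1 hdl.2
    obtain ⟨hnum, hden⟩ := num_denom_unique hmon hcop' ((F_succ_eq m hF).trans heq)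
    have hr' : (m+1) % 6 = 2 := by omega
    constructor
    · show InvAt ((m+1) % 6) _ _
      rw [hr', hnum, hden]
      exact ⟨hshC, d1, d2⟩
    · rw [hnum, d3, hr]
      norm_num
  · -- class 2 : ShC, Dlo → ShA, Dhi, δ = 1
    rw [hr] at h
    obtain ⟨hsh, hdl⟩ := h
    have hF : F m ≠ 0 := by
      intro h0; apply hsh.ne_zero; rw [h0]; exact RatFunc.num_zero
    obtain ⟨hmon, hcop', heq, hshA⟩ := coreC hcopm hsh
    obtain ⟨d1, d2, d3⟩ := degreeOut_lo hmq hsh.ne_zero hdl.1 hdl.2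
    obtain ⟨hnum, hden⟩ := num_denom_unique hmon hcop' ((F_succ_eq m hF).trans heq)
    have hr' : (m+1) % 6 = 3 := by omega
    constructor
    · show InvAt ((m+1) % 6) _ _
      rw [hr', hnum, hden]
      exact ⟨hshA, d1, d2⟩
    · rw [hnum, d3, hr]
      norm_num
  · -- class 3 : ShA, Dhi → ShB, Dlo, δ = -1
    rw [hr] at h
    obtain ⟨hsh, hdl⟩ := h
    have hF : F m ≠ 0 := by
      intro h0; apply hsh.ne_zero; rw [h0]; exact RatFunc.num_zero
    obtain ⟨hq0, u, hu, hu0, huq⟩ := hsh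
    have hun : u ≠ 0 := fun h0 => hu0 (by rw [h0]; simp)
    obtain ⟨hmon, hcop', heq, hshB⟩ := coreA hcopm ⟨hq0, u, hu, hu0, huq⟩ hu hu0 huq
    obtain ⟨d1, d2, d3⟩ := degreeOutA_hi hmq hu hun hdl.1 hdl.2
    have d3' : (((u - (F m).denom) * ((F m).num - (F m).denom) * C ((X*u^2).leadingCoeff)⁻¹).natDegree : ℤ)
        = 2 * ((F m).num.natDegree : ℤ) + (-1) := by omega
    obtain ⟨hnum, hden⟩ := num_denom_unique hmon hcop' ((F_succ_eq m hF).trans heq)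
    have hr' : (m+1) % 6 = 4 := by omega
    constructor
    · show InvAt ((m+1) % 6) _ _
      rw [hr', hnum, hden]
      exact ⟨hshB, d1, d2⟩
    · rw [hnum, d3', hr]
      norm_num
  · -- class 4 : ShB, Dlo → ShC, Dhi, δ = 1
    rw [hr] at h
    obtain ⟨hsh, hdl⟩ := h
    have hF : F m ≠ 0 := by
      intro h0; apply hsh.ne_zero; rw [h0]; exact RatFunc.num_zero
    obtain ⟨hmon, hcop', heq, hshC⟩ := coreB hcopm hsh
    obtain ⟨d1, d2, d3⟩ := degreeOut_lo hmq hsh.ne_zero hdl.1 hdl.2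
    obtain ⟨hnum, hden⟩ := num_denom_unique hmon hcop' ((F_succ_eq m hF).trans heq)
    have hr' : (m+1) % 6 = 5 := by omega
    constructor
    · show InvAt ((m+1) % 6) _ _
      rw [hr', hnum, hden]
      exact ⟨hshC, d1, d2⟩
    · rw [hnum, d3, hr]
      norm_num
  · -- class 5 : ShC, Dhi → ShA, Dlo, δ = 0
    rw [hr] at h
    obtain ⟨hsh, hdl⟩ := h
    have hF : F m ≠ 0 := by
      intro h0; apply hsh.ne_zero; rw [h0]; exact RatFunc.num_zero
    obtain ⟨hmon, hcop', heq, hshA⟩ := coreC hcopm hsh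
    obtain ⟨d1, d2, d3⟩ := degreeOut_hi hmq hsh.ne_zero hdl.1 hdl.2
    obtain ⟨hnum, hden⟩ := num_denom_unique hmon hcop' ((F_succ_eq m hF).trans heq)
    have hr' : (m+1) % 6 = 0 := by omega
    constructor
    · show InvAt ((m+1) % 6) _ _
      rw [hr', hnum, hden]
      exact ⟨hshA, d1, d2⟩
    · rw [hnum, d3, hr]
      norm_num

lemma inv_all (m : ℕ) : Inv m := by
  induction m with
  | zero => exact inv_zero
  | succ n ih => exact (key n ih).1

end FAux

theorem F_num_natDegree_rec (m : ℕ) :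
    ((F (m + 1)).num.natDegree : ℤ) =
      2 * ((F m).num.natDegree : ℤ) +
        (if m % 6 = 3 then -1 else if m % 6 = 2 ∨ m % 6 = 4 then 1 else 0) := by
  exact (FAux.key m (FAux.inv_all m)).2
end

section
/- For every m : ℕ, 21·natDegree((F m).num − X·(F m).denom) = 23·2^m + s(m), as an identity in ℤ, where s(m) = 19, −4, 13, 5, 10, −1 according as m ≡ 0, 1, 2, 3, 4, 5 (mod 6). (Equivalently, the degree of p_m − a·q_m equals a_m + 1 if m is even and a_m if m is odd, where a_m = deg p_m.) -/
open Polynomial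

noncomputable abbrev aM : ℚ[X] →+* RatFunc ℚ := algebraMap ℚ[X] (RatFunc ℚ)

/- ## Generic helper lemmas -/

lemma sub_deg {r s : ℚ[X]} {n : ℕ} (hr : r.natDegree ≤ n) (hs : s.natDegree ≤ n)
    (hne : r.coeff n ≠ s.coeff n) :
    (r - s).natDegree = n ∧ (r - s).leadingCoeff = r.coeff n - s.coeff n ∧ r - s ≠ 0 := by
  have hc : (r - s).coeff n ≠ 0 := by simpa [coeff_sub, sub_eq_zero] using hne
  have hle : (r - s).natDegree ≤ n := (natDegree_sub_le r s).trans (by omega)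
  have h : (r - s).natDegree = n := le_antisymm hle (le_natDegree_of_ne_zero hc)
  refine ⟨h, by rw [leadingCoeff, h, coeff_sub], fun h0 => hc (by simp [h0])⟩

lemma coeff_mul_one' (r s : ℚ[X]) :
    (r * s).coeff 1 = r.coeff 0 * s.coeff 1 + r.coeff 1 * s.coeff 0 := by
  rw [coeff_mul, Finset.Nat.sum_antidiagonal_eq_sum_range_succ_mk]
  simp [Finset.sum_range_succ]

lemma cXm0 (t : ℚ[X]) : (X * t).coeff 0 = 0 := by
  rw [mul_coeff_zero, coeff_X_zero, zero_mul]

lemma cXm1 (t : ℚ[X]) : (X * t).coeff 1 = t.coeff 0 := coeff_X_mul t 0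

lemma isCoprime_X_of {p : ℚ[X]} (h : p.coeff 0 ≠ 0) : IsCoprime X p := by
  refine ⟨-C (p.coeff 0)⁻¹ * divX p, C (p.coeff 0)⁻¹, ?_⟩
  have h1 : X * divX p + C (p.coeff 0) = p := X_mul_divX_add p
  have h2 : C (p.coeff 0)⁻¹ * C (p.coeff 0) = 1 := by
    rw [← C_mul, inv_mul_cancel₀ h, C_1]
  linear_combination (-C (p.coeff 0)⁻¹) * h1 + h2

lemma quad1 {u v : ℚ} (hv : v ≠ 0) : u^2 + u*v - v^2 ≠ 0 := by
  intro h
  have h5 : IsSquare (5:ℚ) := ⟨(2*u+v)/v, by field_simp; linear_combination (-4)*h⟩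
  have : ¬ IsSquare ((5:ℕ):ℚ) := by
    rw [Rat.isSquare_natCast_iff]
    exact (by norm_num : Nat.Prime 5).not_isSquare
  exact this (by exact_mod_cast h5)

lemma quad2 {u v : ℚ} (hv : v ≠ 0) : u^2 - u*v + v^2 ≠ 0 := by
  intro h
  have h0 : 0 < v^2 := by positivity
  nlinarith [sq_nonneg (2*u - v)]

/- ## num/denom extraction -/

lemma extract {f : RatFunc ℚ} {p q : ℚ[X]} (hp : p ≠ 0) (hq : q ≠ 0)
    (cop : IsCoprime p q) (hf : f = aM p / aM q) :
    ∃ c : ℚ, c ≠ 0 ∧ f.num = C c * p ∧ f.denom = C c * q := by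
  have hqm : aM q ≠ 0 := RatFunc.algebraMap_ne_zero hq
  have hf0 : f ≠ 0 := by
    rw [hf]
    exact div_ne_zero (RatFunc.algebraMap_ne_zero hp) hqm
  have hnum0 : f.num ≠ 0 := RatFunc.num_ne_zero hf0
  have hcross : f.num * q = p * f.denom := by
    have h1 : aM f.num / aM f.denom = aM p / aM q := by
      rw [show (aM : ℚ[X] →+* RatFunc ℚ) = algebraMap ℚ[X] (RatFunc ℚ) from rfl,
        RatFunc.num_div_denom, hf]
    rw [div_eq_div_iff (RatFunc.algebraMap_ne_zero (RatFunc.denom_ne_zero f)) hqm] at h1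
    exact RatFunc.algebraMap_injective ℚ (by simpa only [map_mul] using h1)
  have cnd : IsCoprime f.num f.denom := RatFunc.isCoprime_num_denom f
  have h3 : f.num ∣ p := cnd.dvd_of_dvd_mul_right ⟨q, hcross.symm⟩
  have h4 : p ∣ f.num := cop.dvd_of_dvd_mul_right ⟨f.denom, hcross⟩
  obtain ⟨u, hu⟩ := associated_of_dvd_dvd h4 h3
  obtain ⟨c, hc, hcu⟩ := Polynomial.isUnit_iff.mp u.isUnit
  have hnum : f.num = C c * p := by rw [← hu, hcu]; ring
  have hden : f.denom = C c * q := by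
    have h5 : p * (C c * q) = p * f.denom := by rw [← hcross, hnum]; ring
    exact (mul_left_cancel₀ hp h5).symm
  exact ⟨c, hc.ne_zero, hnum, hden⟩

/- ## the recursion step for F -/

lemma F_succ {m : ℕ} {p q p' q' : ℚ[X]} (hp : p ≠ 0) (hq : q ≠ 0) (hq' : q' ≠ 0)
    (hkey : (p - X*q) * (p - q) * q' = p' * p^2)
    (hF : F m = aM p / aM q) : F (m+1) = aM p' / aM q' := by
  have hpm : aM p ≠ 0 := RatFunc.algebraMap_ne_zero hp
  have hqm : aM q ≠ 0 := RatFunc.algebraMap_ne_zero hq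
  have hqm' : aM q' ≠ 0 := RatFunc.algebraMap_ne_zero hq'
  have hX : (RatFunc.X : RatFunc ℚ) = aM X := (RatFunc.algebraMap_X).symm
  rw [F, hF, hX]
  field_simp
  have h2 := congrArg aM (show (p - q*X) * (p - q) * q' = p^2 * p' by
    linear_combination hkey)
  simpa only [map_mul, map_sub, map_pow] using h2

/- ## The invariant -/

def eInt (k : ℕ) : ℤ :=
  if k = 0 then -2 else if k = 1 then -4 else if k = 2 then -8
  else if k = 3 then 5 else if k = 4 then -11 else -1

def Ord3 (k : ℕ) (p q : ℚ[X]) : Prop :=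
  if k = 0 then
    p.coeff 0 = 0 ∧ p.coeff 1 ≠ 0 ∧ q.coeff 0 ≠ 0 ∧ p.coeff 1 ≠ q.coeff 0
  else if k = 1 then
    q.coeff 0 = 0 ∧ q.coeff 1 ≠ 0 ∧ p.coeff 0 ≠ 0 ∧ q.coeff 1 + p.coeff 0 ≠ 0
  else
    p.coeff 0 = q.coeff 0 ∧ p.coeff 0 ≠ 0 ∧ p.coeff 1 - q.coeff 1 ≠ 0 ∧
      p.coeff 1 - q.coeff 1 ≠ p.coeff 0

lemma Ord3_zero (p q : ℚ[X]) : Ord3 0 p q ↔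
    (p.coeff 0 = 0 ∧ p.coeff 1 ≠ 0 ∧ q.coeff 0 ≠ 0 ∧ p.coeff 1 ≠ q.coeff 0) := by
  simp [Ord3]

lemma Ord3_one (p q : ℚ[X]) : Ord3 1 p q ↔
    (q.coeff 0 = 0 ∧ q.coeff 1 ≠ 0 ∧ p.coeff 0 ≠ 0 ∧ q.coeff 1 + p.coeff 0 ≠ 0) := by
  simp [Ord3]

lemma Ord3_two (p q : ℚ[X]) : Ord3 2 p q ↔
    (p.coeff 0 = q.coeff 0 ∧ p.coeff 0 ≠ 0 ∧ p.coeff 1 - q.coeff 1 ≠ 0 ∧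
      p.coeff 1 - q.coeff 1 ≠ p.coeff 0) := by
  simp [Ord3]

structure PQInv (m : ℕ) (p q : ℚ[X]) : Prop where
  hF : F m = aM p / aM q
  hp : p ≠ 0
  hq : q ≠ 0
  cop : IsCoprime p q
  lcne : p.leadingCoeff ≠ q.leadingCoeff
  hdeg : p.natDegree = q.natDegree + m % 2
  hint : 21 * (p.natDegree : ℤ) = 23 * 2^m + eInt (m % 6)
  ord : Ord3 (m % 3) p q

/- ## Base case -/

lemma C2_eq : (C (2:ℚ) : ℚ[X]) = 2 := map_ofNat C 2

lemma pqinv_zero : PQInv 0 (C 2 * X) (X + 1) := by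
  have hdp : (C (2:ℚ) * X).natDegree = 1 := by
    rw [natDegree_C_mul (by norm_num : (2:ℚ) ≠ 0), natDegree_X]
  have hdq : ((X:ℚ[X]) + 1).natDegree = 1 := by
    rw [show ((X:ℚ[X]) + 1) = X + C 1 by rw [C_1]]
    exact natDegree_X_add_C 1
  refine ⟨?_, ?_, ?_, ?_, ?_, ?_, ?_, ?_⟩
  · rw [F]
    congr 1
    · rw [map_mul, RatFunc.algebraMap_X, C2_eq, map_ofNat]
    · rw [map_add, RatFunc.algebraMap_X, map_one]
  · intro h
    have := congrArg (fun r : ℚ[X] => r.coeff 1) h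
    simp at this
  · intro h
    have := congrArg (fun r : ℚ[X] => r.coeff 0) h
    simp at this
  · refine ⟨C (-(1:ℚ)/2), 1, ?_⟩
    have h1 : C (-(1:ℚ)/2) * (C (2:ℚ) * X) = C ((-(1:ℚ)/2) * 2) * X := by
      rw [C_mul]; ring
    rw [h1]
    norm_num
  · have c1 : (C (2:ℚ) * X).leadingCoeff = 2 := by
      rw [leadingCoeff, hdp]
      simp
    have c2 : ((X:ℚ[X]) + 1).leadingCoeff = 1 := by
      rw [leadingCoeff, hdq]
      simp [coeff_one]
    rw [c1, c2]
    norm_num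
  · rw [hdp, hdq]
  · rw [hdp]
    norm_num [eInt]
  · rw [show (0:ℕ) % 3 = 0 from rfl, Ord3_zero]
    refine ⟨by simp, by simp, by simp, by simp⟩


set_option maxHeartbeats 2000000 in
lemma pqinv_step {m : ℕ} {p q : ℚ[X]} (h : PQInv m p q) : ∃ p' q', PQInv (m+1) p' q' := by
  obtain ⟨hF, hp, hq, cop, lcne, hdeg, hint, ord⟩ := h
  have hu : p.leadingCoeff ≠ 0 := leadingCoeff_ne_zero.mpr hp
  have hv : q.leadingCoeff ≠ 0 := leadingCoeff_ne_zero.mpr hq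
  have hpow : (2:ℤ)^(m+1) = 2 * 2^m := by ring
  rcases (by omega : m % 3 = 0 ∨ m % 3 = 1 ∨ m % 3 = 2) with h3 | h3 | h3
  · -- CASE m % 3 = 0
    rw [h3, Ord3_zero] at ord
    obtain ⟨o1, o2, o3, o4⟩ := ord
    obtain ⟨t, rfl⟩ : ∃ t, p = X * t :=
      ⟨divX p, by conv_lhs => rw [← X_mul_divX_add p, o1, C_0, add_zero]⟩
    rw [cXm1] at o2 o4
    have ht : t ≠ 0 := fun h0 => o2 (by simp [h0])
    have hdp : (X*t).natDegree = 1 + t.natDegree := by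
      rw [natDegree_mul X_ne_zero ht, natDegree_X]
    have hlct : t.leadingCoeff = (X*t).leadingCoeff := by
      rw [leadingCoeff_mul, leadingCoeff_X, one_mul]
    have hne1 : t.coeff q.natDegree ≠ q.coeff q.natDegree := by
      rw [coeff_natDegree]
      rcases (by omega : m % 2 = 0 ∨ m % 2 = 1) with h2 | h2
      · have e1 : t.coeff q.natDegree = 0 := coeff_eq_zero_of_natDegree_lt (by omega)
        rw [e1]
        exact fun h0 => hv h0.symm
      · have e1 : t.coeff q.natDegree = (X*t).leadingCoeff := by
          have e : q.natDegree = t.natDegree := by omega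
          rw [e, coeff_natDegree, hlct]
        rw [e1]
        exact lcne
    obtain ⟨d1, l1, n1⟩ := sub_deg (r := t) (s := q) (n := q.natDegree)
      (by omega) (le_refl _) hne1
    have hne2 : (X*t).coeff (q.natDegree + m % 2) ≠ q.coeff (q.natDegree + m % 2) := by
      have e : q.natDegree + m % 2 = (X*t).natDegree := by omega
      rw [e, coeff_natDegree]
      rcases (by omega : m % 2 = 0 ∨ m % 2 = 1) with h2 | h2
      · have e2 : (X*t).natDegree = q.natDegree := by omega
        rw [e2, coeff_natDegree]
        exact lcne
      · have e2 : q.coeff ((X*t).natDegree) = 0 := coeff_eq_zero_of_natDegree_lt (by omega)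
        rw [e2]
        exact hu
    obtain ⟨d2, l2, n2⟩ := sub_deg (r := X*t) (s := q) (n := q.natDegree + m % 2)
      (by omega) (by omega) hne2
    refine ⟨(t - q) * (X*t - q), t * (X*t), ?_, mul_ne_zero n1 n2, mul_ne_zero ht hp,
      ?_, ?_, ?_, ?_, ?_⟩
    · exact F_succ hp hq (mul_ne_zero ht hp) (by ring) hF
    · have ctq : IsCoprime t q := cop.of_isCoprime_of_dvd_left ⟨X, mul_comm X t⟩
      have A1 : IsCoprime (t - q) t := by
        have h0 := (ctq.symm.neg_left).add_mul_left_left 1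
        rwa [mul_one, neg_add_eq_sub] at h0
      have A3 : IsCoprime (X*t - q) t := by
        have h0 := (ctq.symm.neg_left).add_mul_left_left X
        rwa [mul_comm t X, neg_add_eq_sub] at h0
      have hA2 : (t - q).coeff 0 ≠ 0 := by
        rw [coeff_sub]
        exact sub_ne_zero.mpr o4
      have A2 : IsCoprime (t - q) X := (isCoprime_X_of hA2).symm
      have hA4 : (X*t - q).coeff 0 ≠ 0 := by
        rw [coeff_sub, cXm0, zero_sub]
        exact neg_ne_zero.mpr o3
      have A4 : IsCoprime (X*t - q) X := (isCoprime_X_of hA4).symm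
      exact (A1.mul_right (A2.mul_right A1)).mul_left (A3.mul_right (A4.mul_right A3))
    · -- leading coefficients distinct
      have hlp : ((t - q) * (X*t - q)).leadingCoeff =
          (t.coeff q.natDegree - q.leadingCoeff) *
            ((X*t).coeff (q.natDegree + m % 2) - q.coeff (q.natDegree + m % 2)) := by
        rw [leadingCoeff_mul, l1, l2, coeff_natDegree]
      have hlq : (t * (X*t)).leadingCoeff = (X*t).leadingCoeff * (X*t).leadingCoeff := by
        rw [leadingCoeff_mul, hlct]
      have hXtc : (X*t).coeff (q.natDegree + m % 2) = (X*t).leadingCoeff := by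
        have e : q.natDegree + m % 2 = (X*t).natDegree := by omega
        rw [e, coeff_natDegree]
      rcases (by omega : m % 2 = 0 ∨ m % 2 = 1) with h2 | h2
      · have e1 : t.coeff q.natDegree = 0 := coeff_eq_zero_of_natDegree_lt (by omega)
        have e2 : q.coeff (q.natDegree + m % 2) = q.leadingCoeff := by
          have e : q.natDegree + m % 2 = q.natDegree := by omega
          rw [e, coeff_natDegree]
        rw [hlp, hlq, e1, e2, hXtc]
        intro heq
        exact quad1 (u := (X*t).leadingCoeff) (v := q.leadingCoeff) hv
          (by linear_combination (-1) * heq)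
      · have e1 : t.coeff q.natDegree = (X*t).leadingCoeff := by
          have e : q.natDegree = t.natDegree := by omega
          rw [e, coeff_natDegree, hlct]
        have e2 : q.coeff (q.natDegree + m % 2) = 0 := coeff_eq_zero_of_natDegree_lt (by omega)
        rw [hlp, hlq, e1, e2, hXtc]
        intro heq
        have h0 : ((X*t).leadingCoeff - q.leadingCoeff) = (X*t).leadingCoeff :=
          mul_right_cancel₀ hu (by linear_combination heq)
        exact hv (by linear_combination (-1) * h0)
    · rw [natDegree_mul n1 n2, natDegree_mul ht hp, d1, d2]
      omega
    · have hd' : ((t - q) * (X*t - q)).natDegree = q.natDegree + (q.natDegree + m % 2) := by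
        rw [natDegree_mul n1 n2, d1, d2]
      rcases (by omega : m % 2 = 0 ∨ m % 2 = 1) with h2 | h2
      · have h6 : m % 6 = 0 := by omega
        have h6' : (m+1) % 6 = 1 := by omega
        rw [h6, show eInt 0 = -2 from rfl] at hint
        rw [h6', show eInt 1 = -4 from rfl]
        have hz : ((((t - q) * (X*t - q)).natDegree : ℤ)) = 2 * ((X*t).natDegree : ℤ) := by
          omega
        rw [hz]
        linarith
      · have h6 : m % 6 = 3 := by omega
        have h6' : (m+1) % 6 = 4 := by omega
        rw [h6, show eInt 3 = 5 from rfl] at hint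
        rw [h6', show eInt 4 = -11 from rfl]
        have hz : ((((t - q) * (X*t - q)).natDegree : ℤ)) = 2 * ((X*t).natDegree : ℤ) - 1 := by
          omega
        rw [hz]
        linarith
    · have h31 : (m+1) % 3 = 1 := by omega
      rw [h31, Ord3_one]
      have e0 : ((t - q) * (X*t - q)).coeff 0 = (t.coeff 0 - q.coeff 0) * (0 - q.coeff 0) := by
        rw [mul_coeff_zero, coeff_sub, coeff_sub, cXm0]
      have eq0 : (t * (X*t)).coeff 0 = 0 := by
        rw [mul_coeff_zero, cXm0, mul_zero]
      have eq1 : (t * (X*t)).coeff 1 = t.coeff 0 * t.coeff 0 := by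
        rw [coeff_mul_one', cXm0, cXm1, mul_zero, add_zero]
      refine ⟨eq0, ?_, ?_, ?_⟩
      · rw [eq1]
        exact mul_ne_zero o2 o2
      · rw [e0]
        exact mul_ne_zero (sub_ne_zero.mpr o4) (by rw [zero_sub]; exact neg_ne_zero.mpr o3)
      · have hsum : (t * (X*t)).coeff 1 + ((t - q) * (X*t - q)).coeff 0 =
            t.coeff 0 ^ 2 - t.coeff 0 * q.coeff 0 + q.coeff 0 ^ 2 := by
          rw [eq1, e0]; ring
        rw [hsum]
        exact quad2 o3
  · -- CASE m % 3 = 1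
    rw [h3, Ord3_one] at ord
    obtain ⟨o1, o2, o3, o4⟩ := ord
    have hp0 : p.coeff 0 ≠ 0 := o3
    have hXq : (X*q).natDegree = q.natDegree + 1 := by
      rw [natDegree_mul X_ne_zero hq, natDegree_X]
      omega
    have hne1 : p.coeff (q.natDegree + 1) ≠ (X*q).coeff (q.natDegree + 1) := by
      rw [coeff_X_mul q q.natDegree, coeff_natDegree]
      rcases (by omega : m % 2 = 0 ∨ m % 2 = 1) with h2 | h2
      · have e1 : p.coeff (q.natDegree + 1) = 0 := coeff_eq_zero_of_natDegree_lt (by omega)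
        rw [e1]
        exact fun h0 => hv h0.symm
      · have e1 : p.coeff (q.natDegree + 1) = p.leadingCoeff := by
          have e : q.natDegree + 1 = p.natDegree := by omega
          rw [e, coeff_natDegree]
        rw [e1]
        exact lcne
    obtain ⟨d1, l1, n1⟩ := sub_deg (r := p) (s := X*q) (n := q.natDegree + 1)
      (by omega) (by omega) hne1
    have hne2 : p.coeff (q.natDegree + m % 2) ≠ q.coeff (q.natDegree + m % 2) := by
      have e : q.natDegree + m % 2 = p.natDegree := by omega
      rw [e, coeff_natDegree]
      rcases (by omega : m % 2 = 0 ∨ m % 2 = 1) with h2 | h2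
      · have e2 : p.natDegree = q.natDegree := by omega
        rw [e2, coeff_natDegree]
        exact lcne
      · have e2 : q.coeff p.natDegree = 0 := coeff_eq_zero_of_natDegree_lt (by omega)
        rw [e2]
        exact hu
    obtain ⟨d2, l2, n2⟩ := sub_deg (r := p) (s := q) (n := q.natDegree + m % 2)
      (by omega) (by omega) hne2
    refine ⟨(p - X*q) * (p - q), p * p, ?_, mul_ne_zero n1 n2, mul_ne_zero hp hp,
      ?_, ?_, ?_, ?_, ?_⟩
    · exact F_succ hp hq (mul_ne_zero hp hp) (by ring) hF
    · have cXp : IsCoprime X p := isCoprime_X_of hp0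
      have c1 : IsCoprime (p - X*q) p := by
        have h0 := ((cXp.mul_left cop.symm).neg_left).add_mul_left_left 1
        rwa [mul_one, neg_add_eq_sub] at h0
      have c2 : IsCoprime (p - q) p := by
        have h0 := (cop.symm.neg_left).add_mul_left_left 1
        rwa [mul_one, neg_add_eq_sub] at h0
      exact (c1.mul_left c2).mul_right (c1.mul_left c2)
    · have hlp : ((p - X*q) * (p - q)).leadingCoeff =
          (p.coeff (q.natDegree + 1) - q.leadingCoeff) *
            (p.coeff (q.natDegree + m % 2) - q.coeff (q.natDegree + m % 2)) := by
        rw [leadingCoeff_mul, l1, l2, coeff_X_mul q q.natDegree, coeff_natDegree]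
      have hlq : (p * p).leadingCoeff = p.leadingCoeff * p.leadingCoeff := leadingCoeff_mul p p
      have hpc : p.coeff (q.natDegree + m % 2) = p.leadingCoeff := by
        have e : q.natDegree + m % 2 = p.natDegree := by omega
        rw [e, coeff_natDegree]
      rcases (by omega : m % 2 = 0 ∨ m % 2 = 1) with h2 | h2
      · have e1 : p.coeff (q.natDegree + 1) = 0 := coeff_eq_zero_of_natDegree_lt (by omega)
        have e2 : q.coeff (q.natDegree + m % 2) = q.leadingCoeff := by
          have e : q.natDegree + m % 2 = q.natDegree := by omega
          rw [e, coeff_natDegree]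
        rw [hlp, hlq, e1, e2, hpc]
        intro heq
        exact quad1 (u := p.leadingCoeff) (v := q.leadingCoeff) hv
          (by linear_combination (-1) * heq)
      · have e1 : p.coeff (q.natDegree + 1) = p.leadingCoeff := by
          have e : q.natDegree + 1 = p.natDegree := by omega
          rw [e, coeff_natDegree]
        have e2 : q.coeff (q.natDegree + m % 2) = 0 := coeff_eq_zero_of_natDegree_lt (by omega)
        rw [hlp, hlq, e1, e2, hpc]
        intro heq
        have h0 : (p.leadingCoeff - q.leadingCoeff) = p.leadingCoeff :=
          mul_right_cancel₀ hu (by linear_combination heq)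
        exact hv (by linear_combination (-1) * h0)
    · rw [natDegree_mul n1 n2, natDegree_mul hp hp, d1, d2]
      omega
    · have hd' : ((p - X*q) * (p - q)).natDegree = (q.natDegree + 1) + (q.natDegree + m % 2) := by
        rw [natDegree_mul n1 n2, d1, d2]
      rcases (by omega : m % 2 = 0 ∨ m % 2 = 1) with h2 | h2
      · have h6 : m % 6 = 4 := by omega
        have h6' : (m+1) % 6 = 5 := by omega
        rw [h6, show eInt 4 = -11 from rfl] at hint
        rw [h6', show eInt 5 = -1 from rfl]
        have hz : ((((p - X*q) * (p - q)).natDegree : ℤ)) = 2 * (p.natDegree : ℤ) + 1 := by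
          omega
        rw [hz]
        linarith
      · have h6 : m % 6 = 1 := by omega
        have h6' : (m+1) % 6 = 2 := by omega
        rw [h6, show eInt 1 = -4 from rfl] at hint
        rw [h6', show eInt 2 = -8 from rfl]
        have hz : ((((p - X*q) * (p - q)).natDegree : ℤ)) = 2 * (p.natDegree : ℤ) := by
          omega
        rw [hz]
        linarith
    · have h32 : (m+1) % 3 = 2 := by omega
      rw [h32, Ord3_two]
      have e0 : ((p - X*q) * (p - q)).coeff 0 = p.coeff 0 * p.coeff 0 := by
        rw [mul_coeff_zero, coeff_sub, coeff_sub, cXm0, o1]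
        ring
      have eq0 : (p * p).coeff 0 = p.coeff 0 * p.coeff 0 := mul_coeff_zero p p
      have e1 : ((p - X*q) * (p - q)).coeff 1 - (p * p).coeff 1 = -(p.coeff 0 * q.coeff 1) := by
        rw [coeff_mul_one', coeff_mul_one', coeff_sub, coeff_sub, coeff_sub, coeff_sub,
          cXm0, cXm1, o1]
        ring
      refine ⟨by rw [e0, eq0], by rw [e0]; exact mul_ne_zero o3 o3, ?_, ?_⟩
      · rw [e1]
        exact neg_ne_zero.mpr (mul_ne_zero o3 o2)
      · rw [e1, e0]
        intro h0
        rcases mul_eq_zero.mp (show p.coeff 0 * (q.coeff 1 + p.coeff 0) = 0 by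
          linear_combination (-1) * h0) with hh | hh
        · exact o3 hh
        · exact o4 hh
  · -- CASE m % 3 = 2
    rw [h3, Ord3_two] at ord
    obtain ⟨o1, o2, o3, o4⟩ := ord
    have hp0 : p.coeff 0 ≠ 0 := o2
    have hXq : (X*q).natDegree = q.natDegree + 1 := by
      rw [natDegree_mul X_ne_zero hq, natDegree_X]
      omega
    have hne1 : p.coeff (q.natDegree + 1) ≠ (X*q).coeff (q.natDegree + 1) := by
      rw [coeff_X_mul q q.natDegree, coeff_natDegree]
      rcases (by omega : m % 2 = 0 ∨ m % 2 = 1) with h2 | h2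
      · have e1 : p.coeff (q.natDegree + 1) = 0 := coeff_eq_zero_of_natDegree_lt (by omega)
        rw [e1]
        exact fun h0 => hv h0.symm
      · have e1 : p.coeff (q.natDegree + 1) = p.leadingCoeff := by
          have e : q.natDegree + 1 = p.natDegree := by omega
          rw [e, coeff_natDegree]
        rw [e1]
        exact lcne
    obtain ⟨d1, l1, n1⟩ := sub_deg (r := p) (s := X*q) (n := q.natDegree + 1)
      (by omega) (by omega) hne1
    have hne2 : p.coeff (q.natDegree + m % 2) ≠ q.coeff (q.natDegree + m % 2) := by
      have e : q.natDegree + m % 2 = p.natDegree := by omega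
      rw [e, coeff_natDegree]
      rcases (by omega : m % 2 = 0 ∨ m % 2 = 1) with h2 | h2
      · have e2 : p.natDegree = q.natDegree := by omega
        rw [e2, coeff_natDegree]
        exact lcne
      · have e2 : q.coeff p.natDegree = 0 := coeff_eq_zero_of_natDegree_lt (by omega)
        rw [e2]
        exact hu
    obtain ⟨d2, l2, n2⟩ := sub_deg (r := p) (s := q) (n := q.natDegree + m % 2)
      (by omega) (by omega) hne2
    refine ⟨(p - X*q) * (p - q), p * p, ?_, mul_ne_zero n1 n2, mul_ne_zero hp hp,
      ?_, ?_, ?_, ?_, ?_⟩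
    · exact F_succ hp hq (mul_ne_zero hp hp) (by ring) hF
    · have cXp : IsCoprime X p := isCoprime_X_of hp0
      have c1 : IsCoprime (p - X*q) p := by
        have h0 := ((cXp.mul_left cop.symm).neg_left).add_mul_left_left 1
        rwa [mul_one, neg_add_eq_sub] at h0
      have c2 : IsCoprime (p - q) p := by
        have h0 := (cop.symm.neg_left).add_mul_left_left 1
        rwa [mul_one, neg_add_eq_sub] at h0
      exact (c1.mul_left c2).mul_right (c1.mul_left c2)
    · have hlp : ((p - X*q) * (p - q)).leadingCoeff =
          (p.coeff (q.natDegree + 1) - q.leadingCoeff) *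
            (p.coeff (q.natDegree + m % 2) - q.coeff (q.natDegree + m % 2)) := by
        rw [leadingCoeff_mul, l1, l2, coeff_X_mul q q.natDegree, coeff_natDegree]
      have hlq : (p * p).leadingCoeff = p.leadingCoeff * p.leadingCoeff := leadingCoeff_mul p p
      have hpc : p.coeff (q.natDegree + m % 2) = p.leadingCoeff := by
        have e : q.natDegree + m % 2 = p.natDegree := by omega
        rw [e, coeff_natDegree]
      rcases (by omega : m % 2 = 0 ∨ m % 2 = 1) with h2 | h2
      · have e1 : p.coeff (q.natDegree + 1) = 0 := coeff_eq_zero_of_natDegree_lt (by omega)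
        have e2 : q.coeff (q.natDegree + m % 2) = q.leadingCoeff := by
          have e : q.natDegree + m % 2 = q.natDegree := by omega
          rw [e, coeff_natDegree]
        rw [hlp, hlq, e1, e2, hpc]
        intro heq
        exact quad1 (u := p.leadingCoeff) (v := q.leadingCoeff) hv
          (by linear_combination (-1) * heq)
      · have e1 : p.coeff (q.natDegree + 1) = p.leadingCoeff := by
          have e : q.natDegree + 1 = p.natDegree := by omega
          rw [e, coeff_natDegree]
        have e2 : q.coeff (q.natDegree + m % 2) = 0 := coeff_eq_zero_of_natDegree_lt (by omega)
        rw [hlp, hlq, e1, e2, hpc]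
        intro heq
        have h0 : (p.leadingCoeff - q.leadingCoeff) = p.leadingCoeff :=
          mul_right_cancel₀ hu (by linear_combination heq)
        exact hv (by linear_combination (-1) * h0)
    · rw [natDegree_mul n1 n2, natDegree_mul hp hp, d1, d2]
      omega
    · have hd' : ((p - X*q) * (p - q)).natDegree = (q.natDegree + 1) + (q.natDegree + m % 2) := by
        rw [natDegree_mul n1 n2, d1, d2]
      rcases (by omega : m % 2 = 0 ∨ m % 2 = 1) with h2 | h2
      · have h6 : m % 6 = 2 := by omega
        have h6' : (m+1) % 6 = 3 := by omega
        rw [h6, show eInt 2 = -8 from rfl] at hint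
        rw [h6', show eInt 3 = 5 from rfl]
        have hz : ((((p - X*q) * (p - q)).natDegree : ℤ)) = 2 * (p.natDegree : ℤ) + 1 := by
          omega
        rw [hz]
        linarith
      · have h6 : m % 6 = 5 := by omega
        have h6' : (m+1) % 6 = 0 := by omega
        rw [h6, show eInt 5 = -1 from rfl] at hint
        rw [h6', show eInt 0 = -2 from rfl]
        have hz : ((((p - X*q) * (p - q)).natDegree : ℤ)) = 2 * (p.natDegree : ℤ) := by
          omega
        rw [hz]
        linarith
    · have h30 : (m+1) % 3 = 0 := by omega
      rw [h30, Ord3_zero]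
      have e0 : ((p - X*q) * (p - q)).coeff 0 = 0 := by
        rw [mul_coeff_zero, coeff_sub, coeff_sub, cXm0, o1, sub_self, mul_zero]
      have e1 : ((p - X*q) * (p - q)).coeff 1 = p.coeff 0 * (p.coeff 1 - q.coeff 1) := by
        rw [coeff_mul_one', coeff_sub, coeff_sub, coeff_sub, coeff_sub, cXm0, cXm1, o1]
        ring
      refine ⟨e0, ?_, ?_, ?_⟩
      · rw [e1]
        exact mul_ne_zero o2 o3
      · rw [mul_coeff_zero]
        exact mul_ne_zero o2 o2
      · rw [e1, mul_coeff_zero]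
        intro h0
        exact o4 (mul_left_cancel₀ o2 h0)

lemma pqinv_all (m : ℕ) : ∃ p q, PQInv m p q := by
  induction m with
  | zero => exact ⟨_, _, pqinv_zero⟩
  | succ n ih =>
    obtain ⟨p, q, h⟩ := ih
    exact pqinv_step h

set_option maxHeartbeats 2000000 in
theorem degree_num_sub_X_mul_denom (m : ℕ) :
    21 * (((F m).num - Polynomial.X * (F m).denom).natDegree : ℤ) =
      23 * 2 ^ m +
        (if m % 6 = 0 then 19 else if m % 6 = 1 then -4 else if m % 6 = 2 then 13
          else if m % 6 = 3 then 5 else if m % 6 = 4 then 10 else -1) := by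
  obtain ⟨p, q, hinv⟩ := pqinv_all m
  obtain ⟨hF, hp, hq, cop, lcne, hdeg, hint, ord⟩ := hinv
  have hu : p.leadingCoeff ≠ 0 := leadingCoeff_ne_zero.mpr hp
  have hv : q.leadingCoeff ≠ 0 := leadingCoeff_ne_zero.mpr hq
  obtain ⟨c, hc, hnum, hden⟩ := extract hp hq cop hF
  have hsub : (F m).num - X * (F m).denom = C c * (p - X*q) := by
    rw [hnum, hden]
    ring
  have hXq : (X*q).natDegree = q.natDegree + 1 := by
    rw [natDegree_mul X_ne_zero hq, natDegree_X]
    omega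
  have hne : p.coeff (q.natDegree + 1) ≠ (X*q).coeff (q.natDegree + 1) := by
    rw [coeff_X_mul q q.natDegree, coeff_natDegree]
    rcases (by omega : m % 2 = 0 ∨ m % 2 = 1) with h2 | h2
    · have e1 : p.coeff (q.natDegree + 1) = 0 := coeff_eq_zero_of_natDegree_lt (by omega)
      rw [e1]
      exact fun h0 => hv h0.symm
    · have e1 : p.coeff (q.natDegree + 1) = p.leadingCoeff := by
        have e : q.natDegree + 1 = p.natDegree := by omega
        rw [e, coeff_natDegree]
      rw [e1]
      exact lcne
  obtain ⟨d1, l1, n1⟩ := sub_deg (r := p) (s := X*q) (n := q.natDegree + 1)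
    (by omega) (by omega) hne
  have hndeg : ((F m).num - X * (F m).denom).natDegree = q.natDegree + 1 := by
    rw [hsub, natDegree_C_mul hc, d1]
  rw [hndeg]
  rcases (by omega : m % 6 = 0 ∨ m % 6 = 1 ∨ m % 6 = 2 ∨ m % 6 = 3 ∨ m % 6 = 4 ∨ m % 6 = 5) with
    h6 | h6 | h6 | h6 | h6 | h6
  · rw [h6, show eInt 0 = -2 from rfl] at hint
    rw [h6]
    norm_num
    have hz : ((q.natDegree + 1 : ℕ) : ℤ) = (p.natDegree : ℤ) + 1 := by omega
    push_cast at hz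
    linarith
  · rw [h6, show eInt 1 = -4 from rfl] at hint
    rw [h6]
    norm_num
    have hz : ((q.natDegree + 1 : ℕ) : ℤ) = (p.natDegree : ℤ) := by omega
    push_cast at hz
    linarith
  · rw [h6, show eInt 2 = -8 from rfl] at hint
    rw [h6]
    norm_num
    have hz : ((q.natDegree + 1 : ℕ) : ℤ) = (p.natDegree : ℤ) + 1 := by omega
    push_cast at hz
    linarith
  · rw [h6, show eInt 3 = 5 from rfl] at hint
    rw [h6]
    norm_num
    have hz : ((q.natDegree + 1 : ℕ) : ℤ) = (p.natDegree : ℤ) := by omega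
    push_cast at hz
    linarith
  · rw [h6, show eInt 4 = -11 from rfl] at hint
    rw [h6]
    norm_num
    have hz : ((q.natDegree + 1 : ℕ) : ℤ) = (p.natDegree : ℤ) + 1 := by omega
    push_cast at hz
    linarith
  · rw [h6, show eInt 5 = -1 from rfl] at hint
    rw [h6]
    norm_num
    have hz : ((q.natDegree + 1 : ℕ) : ℤ) = (p.natDegree : ℤ) := by omega
    push_cast at hz
    linarith
end

section
/- For every m : ℕ, 21·natDegree((X+1)·(F m).num − X·(F m).denom) = 23·2^m + t(m), as an identity in ℤ, where t(m) = 19, 17, 13, 26, 10, 20 according as m ≡ 0, 1, 2, 3, 4, 5 (mod 6). -/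
open Polynomial

namespace DegAux

theorem rat_sq_ne_five (x : ℚ) : x ^ 2 ≠ 5 := by
  intro h
  have hsq : IsSquare ((5 : ℕ) : ℚ) := ⟨x, by push_cast; rw [← h]; ring⟩
  rw [Rat.isSquare_natCast_iff] at hsq
  obtain ⟨n, hn⟩ := hsq
  rcases Nat.lt_or_ge n 3 with h3 | h3
  · interval_cases n <;> omega
  · nlinarith

theorem quad1 (x : ℚ) : x ^ 2 + x - 1 ≠ 0 := by
  intro h
  exact rat_sq_ne_five (2 * x + 1) (by nlinarith)

theorem quad2 (a b : ℚ) (hb : b ≠ 0) : a ^ 2 - a * b + b ^ 2 ≠ 0 := by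
  intro h
  have hb2 : b ^ 2 > 0 := by positivity
  nlinarith [sq_nonneg (2 * a - b)]

theorem coeff_mul_one' (a b : ℚ[X]) :
    (a * b).coeff 1 = a.coeff 0 * b.coeff 1 + a.coeff 1 * b.coeff 0 := by
  rw [Polynomial.coeff_mul]
  simp [Finset.Nat.sum_antidiagonal_eq_sum_range_succ_mk, Finset.sum_range_succ]

theorem natDegree_sub_eq {a b : ℚ[X]} {d : ℕ} (ha : a.natDegree ≤ d) (hb : b.natDegree ≤ d)
    (h : a.coeff d - b.coeff d ≠ 0) :
    (a - b).natDegree = d ∧ (a - b).leadingCoeff = a.coeff d - b.coeff d := by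
  have hc : (a - b).coeff d ≠ 0 := by rwa [coeff_sub]
  have hle : (a - b).natDegree ≤ d := le_trans (natDegree_sub_le a b) (by omega)
  have hge : d ≤ (a - b).natDegree := le_natDegree_of_ne_zero hc
  have hd : (a - b).natDegree = d := le_antisymm hle hge
  exact ⟨hd, by rw [leadingCoeff, hd, coeff_sub]⟩

theorem num_denom_unique {p q : ℚ[X]} (hq : q.Monic) (h : IsCoprime p q) {x : RatFunc ℚ}
    (hx : x = algebraMap ℚ[X] (RatFunc ℚ) p / algebraMap ℚ[X] (RatFunc ℚ) q) :
    x.num = p ∧ x.denom = q := by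
  have hq0 : q ≠ 0 := hq.ne_zero
  have h1 : x.num * q = p * x.denom := (RatFunc.num_mul_eq_mul_denom_iff hq0).mpr hx
  have hco : IsCoprime x.num x.denom := RatFunc.isCoprime_num_denom x
  have hd1 : x.denom ∣ q := hco.symm.dvd_of_dvd_mul_left ⟨p, by linear_combination h1⟩
  have hd2 : q ∣ x.denom := h.symm.dvd_of_dvd_mul_left ⟨x.num, by linear_combination -h1⟩
  have hden : x.denom = q :=
    Polynomial.eq_of_monic_of_associated (RatFunc.monic_denom x) hq (associated_of_dvd_dvd hd1 hd2)
  refine ⟨?_, hden⟩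
  rw [hden] at h1
  exact mul_right_cancel₀ hq0 h1

theorem num_denom_of_div {P Q : ℚ[X]} (hQ : Q ≠ 0) (hco : IsCoprime P Q) {x : RatFunc ℚ}
    (hx : x = algebraMap ℚ[X] (RatFunc ℚ) P / algebraMap ℚ[X] (RatFunc ℚ) Q) :
    x.num = C Q.leadingCoeff⁻¹ * P ∧ x.denom = C Q.leadingCoeff⁻¹ * Q := by
  have hlc : Q.leadingCoeff ≠ 0 := leadingCoeff_ne_zero.mpr hQ
  have hinv : (Q.leadingCoeff⁻¹ : ℚ) ≠ 0 := inv_ne_zero hlc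
  refine num_denom_unique ?_ ?_ ?_
  · rw [Monic, mul_comm]
    exact Polynomial.monic_mul_leadingCoeff_inv hQ
  · exact (isCoprime_mul_unit_left (isUnit_C.mpr hinv.isUnit) P Q).mpr hco
  · rw [hx, map_mul, map_mul, mul_div_mul_left]
    exact RatFunc.algebraMap_ne_zero (C_ne_zero.mpr hinv)

theorem F_succ_eq (m : ℕ) (hne : F m ≠ 0) :
    F (m + 1) = algebraMap ℚ[X] (RatFunc ℚ)
        (((F m).num - X * (F m).denom) * ((F m).num - (F m).denom)) /
      algebraMap ℚ[X] (RatFunc ℚ) ((F m).num * (F m).num) := by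
  obtain ⟨p, q, hp, hq⟩ : ∃ p q, (F m).num = p ∧ (F m).denom = q := ⟨_, _, rfl, rfl⟩
  have hd : algebraMap ℚ[X] (RatFunc ℚ) q ≠ 0 :=
    RatFunc.algebraMap_ne_zero (hq ▸ (F m).denom_ne_zero)
  have hn : algebraMap ℚ[X] (RatFunc ℚ) p ≠ 0 :=
    RatFunc.algebraMap_ne_zero (hp ▸ RatFunc.num_ne_zero hne)
  have hF : F m = algebraMap ℚ[X] (RatFunc ℚ) p / algebraMap ℚ[X] (RatFunc ℚ) q := by
    rw [← hp, ← hq, RatFunc.num_div_denom]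
  rw [hp, hq]
  show ((F m - RatFunc.X) * (F m - 1)) / (F m) ^ 2 = _
  rw [hF, map_mul, map_sub, map_sub, map_mul, RatFunc.algebraMap_X, map_mul]
  field_simp

/-- The local conditions at `X = 0`, depending on `m % 3`. -/
def Cond (m : ℕ) (p q : ℚ[X]) : Prop :=
  (m % 3 = 0 → p.coeff 0 = 0 ∧ p.coeff 1 ≠ 0 ∧ q.coeff 0 ≠ 0 ∧ p.coeff 1 ≠ q.coeff 0) ∧
  (m % 3 = 1 → q.coeff 0 = 0 ∧ q.coeff 1 ≠ 0 ∧ p.coeff 0 ≠ 0 ∧ p.coeff 0 + q.coeff 1 ≠ 0) ∧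
  (m % 3 = 2 → p.coeff 0 ≠ 0 ∧ p.coeff 0 = q.coeff 0 ∧ p.coeff 1 ≠ q.coeff 1 ∧
    p.coeff 1 - q.coeff 1 ≠ q.coeff 0)

theorem Cond_C_mul {m : ℕ} {k : ℚ} (hk : k ≠ 0) {P Q : ℚ[X]} (h : Cond m P Q) :
    Cond m (C k * P) (C k * Q) := by
  obtain ⟨h0, h1, h2⟩ := h
  refine ⟨fun h3 => ?_, fun h3 => ?_, fun h3 => ?_⟩
  · obtain ⟨a, b, c, d⟩ := h0 h3
    simp only [coeff_C_mul]
    exact ⟨by rw [a, mul_zero], mul_ne_zero hk b, mul_ne_zero hk c,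
      fun h => d (mul_left_cancel₀ hk h)⟩
  · obtain ⟨a, b, c, d⟩ := h1 h3
    simp only [coeff_C_mul]
    exact ⟨by rw [a, mul_zero], mul_ne_zero hk b, mul_ne_zero hk c,
      by rw [← mul_add]; exact mul_ne_zero hk d⟩
  · obtain ⟨a, b, c, d⟩ := h2 h3
    simp only [coeff_C_mul]
    exact ⟨mul_ne_zero hk a, by rw [b], fun h => c (mul_left_cancel₀ hk h),
      by rw [← mul_sub]; exact fun h => d (mul_left_cancel₀ hk h)⟩

/-- The full inductive invariant. -/
def Inv (m : ℕ) : Prop :=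
  1 ≤ (F m).num.natDegree ∧
  (F m).denom.natDegree + m % 2 = (F m).num.natDegree ∧
  (F m).num.leadingCoeff ≠ 1 ∧
  Cond m (F m).num (F m).denom

theorem inv_zero : Inv 0 := by
  have hmon : (X + 1 : ℚ[X]).Monic := by monicity!
  have hco : IsCoprime (2 * X : ℚ[X]) (X + 1) := by
    refine ⟨C (-2⁻¹), 1, ?_⟩
    have h1 : (C (-2⁻¹ : ℚ)) * (2 * X) = -X := by
      rw [show (2 : ℚ[X]) = C 2 from by rw [map_ofNat]]
      rw [← mul_assoc, ← C_mul]; norm_num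
    rw [h1]; ring
  have hF0 : F 0 = algebraMap ℚ[X] (RatFunc ℚ) (2 * X) / algebraMap ℚ[X] (RatFunc ℚ) (X + 1) := by
    show (2 * RatFunc.X) / (RatFunc.X + 1) = _
    rw [map_mul, map_add, map_one, RatFunc.algebraMap_X, map_ofNat]
  obtain ⟨hnum, hden⟩ := num_denom_unique hmon hco hF0
  have h2X : (2 * X : ℚ[X]) = C 2 * X := by rw [map_ofNat]
  have hd1 : (2 * X : ℚ[X]).natDegree = 1 := by
    rw [h2X, natDegree_C_mul (by norm_num), natDegree_X]
  have hd2 : (X + 1 : ℚ[X]).natDegree = 1 := by compute_degree!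
  refine ⟨by rw [hnum, hd1], by rw [hnum, hden, hd1, hd2], ?_, ?_, ?_, ?_⟩
  · rw [hnum, h2X, leadingCoeff_mul, leadingCoeff_C, leadingCoeff_X, mul_one]
    norm_num
  · intro _
    rw [hnum, hden]
    refine ⟨?_, ?_, ?_, ?_⟩ <;> simp
  · intro h; simp at h
  · intro h; simp at h
theorem step (m : ℕ) (h : Inv m) :
    Inv (m + 1) ∧
    (F (m + 1)).num.natDegree + m % 2 + (if m % 3 = 0 then 1 else 0)
      = 2 * (F m).num.natDegree + 1 := by
  obtain ⟨hn1, hdeg, hL1, hc0, hc1, hc2⟩ := h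
  obtain ⟨p, q, hp, hq⟩ : ∃ p q, (F m).num = p ∧ (F m).denom = q := ⟨_, _, rfl, rfl⟩
  simp only [hp, hq] at hn1 hdeg hL1 hc0 hc1 hc2 ⊢
  set n := p.natDegree with hn
  set L := p.leadingCoeff with hlcL
  have hp0 : p ≠ 0 := by
    intro h0
    rw [h0, natDegree_zero] at hn
    omega
  have hFne : F m ≠ 0 := fun h0 => hp0 (by rw [← hp, h0, RatFunc.num_zero])
  have hq0 : q ≠ 0 := hq ▸ (F m).denom_ne_zero
  have hqm : q.Monic := hq ▸ RatFunc.monic_denom (F m)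
  have hco : IsCoprime p q := hp ▸ hq ▸ RatFunc.isCoprime_num_denom (F m)
  have hL0 : L ≠ 0 := leadingCoeff_ne_zero.mpr hp0
  have hpn : p.coeff n = L := coeff_natDegree
  set A := p - X * q with hA
  set B := p - q with hB
  have hA0 : A.coeff 0 = p.coeff 0 := by
    rw [hA, coeff_sub, mul_coeff_zero, coeff_X_zero, zero_mul, sub_zero]
  have hA1 : A.coeff 1 = p.coeff 1 - q.coeff 0 := by
    rw [hA, coeff_sub, coeff_X_mul]
  have hB0 : B.coeff 0 = p.coeff 0 - q.coeff 0 := by rw [hB, coeff_sub]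
  have hB1 : B.coeff 1 = p.coeff 1 - q.coeff 1 := by rw [hB, coeff_sub]
  -- parity facts
  have hPar :
      (m % 2 = 0 ∧ q.natDegree = n ∧ A.natDegree = n + 1 ∧ A.leadingCoeff = -1 ∧
        B.natDegree = n ∧ B.leadingCoeff = L - 1) ∨
      (m % 2 = 1 ∧ q.natDegree + 1 = n ∧ A.natDegree = n ∧ A.leadingCoeff = L - 1 ∧
        B.natDegree = n ∧ B.leadingCoeff = L) := by
    rcases Nat.mod_two_eq_zero_or_one m with h2 | h2
    · left
      have hqd : q.natDegree = n := by omega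
      have hqc : q.coeff n = 1 := by rw [← hqd]; exact hqm.coeff_natDegree
      have hAc : p.coeff (n + 1) - (X * q).coeff (n + 1) = -1 := by
        rw [coeff_eq_zero_of_natDegree_lt (by omega), coeff_X_mul, hqc]; norm_num
      have hXqd : (X * q).natDegree = n + 1 := by
        rw [natDegree_mul X_ne_zero hq0, natDegree_X, hqd]; omega
      have hAres := natDegree_sub_eq (a := p) (b := X * q) (d := n + 1)
        (by omega) (le_of_eq hXqd) (by rw [hAc]; norm_num)
      have hBc : p.coeff n - q.coeff n = L - 1 := by rw [hpn, hqc]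
      have hBres := natDegree_sub_eq (a := p) (b := q) (d := n)
        le_rfl (le_of_eq hqd) (by rw [hBc]; exact sub_ne_zero.mpr hL1)
      exact ⟨h2, hqd, hAres.1, by rw [hAres.2, hAc], hBres.1, by rw [hBres.2, hBc]⟩
    · right
      have hqd : q.natDegree + 1 = n := by omega
      have hqc : q.coeff q.natDegree = 1 := hqm.coeff_natDegree
      have hAc : p.coeff n - (X * q).coeff n = L - 1 := by
        rw [hpn, ← hqd, coeff_X_mul, hqc]
      have hXqd : (X * q).natDegree = n := by
        rw [natDegree_mul X_ne_zero hq0, natDegree_X]; omega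
      have hAres := natDegree_sub_eq (a := p) (b := X * q) (d := n)
        le_rfl (le_of_eq hXqd) (by rw [hAc]; exact sub_ne_zero.mpr hL1)
      have hBc : p.coeff n - q.coeff n = L := by
        rw [hpn, coeff_eq_zero_of_natDegree_lt (by omega), sub_zero]
      have hBres := natDegree_sub_eq (a := p) (b := q) (d := n)
        le_rfl (by omega) (by rw [hBc]; exact hL0)
      exact ⟨h2, hqd, hAres.1, by rw [hAres.2, hAc], hBres.1, by rw [hBres.2, hBc]⟩
  have hAne : A ≠ 0 := by
    rcases hPar with ⟨-, -, -, hAl, -, -⟩ | ⟨-, -, -, hAl, -, -⟩ <;>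
      refine leadingCoeff_ne_zero.mp ?_ <;> rw [hAl]
    · norm_num
    · exact sub_ne_zero.mpr hL1
  have hBne : B ≠ 0 := by
    rcases hPar with ⟨-, -, -, -, -, hBl⟩ | ⟨-, -, -, -, -, hBl⟩ <;>
      refine leadingCoeff_ne_zero.mp ?_ <;> rw [hBl]
    · exact sub_ne_zero.mpr hL1
    · exact hL0
  have h3 : m % 3 = 0 ∨ m % 3 = 1 ∨ m % 3 = 2 := by omega
  have hx0 := F_succ_eq m hFne
  rw [hp, hq, ← hA, ← hB] at hx0
  rcases h3 with h3 | h3 | h3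
  -- ================== CASE m % 3 = 0 : cancellation ==================
  · obtain ⟨hp00, hp1, hq00, hp1q0⟩ := hc0 h3
    set u := p.divX with hu
    have hpu : p = X * u := by
      conv_lhs => rw [← X_mul_divX_add p, hp00, map_zero, add_zero]
    have hu0 : u ≠ 0 := by
      intro h0; rw [h0, mul_zero] at hpu; exact hp0 hpu
    have hud : n = u.natDegree + 1 := by
      rw [hn]; conv_lhs => rw [hpu]
      rw [natDegree_mul X_ne_zero hu0, natDegree_X]; omega
    have huc : u.coeff 0 = p.coeff 1 := coeff_divX
    have hul : u.leadingCoeff = L := by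
      rw [hlcL]; conv_rhs => rw [hpu]
      rw [leadingCoeff_mul, leadingCoeff_X, one_mul]
    have hAXuq : A = X * (u - q) := by
      rw [hA]; conv_lhs => rw [hpu]
      ring
    have epp : p * p = X * (X * (u * u)) := by
      conv_lhs => rw [hpu]
      ring
    have eab : A * B = X * ((u - q) * B) := by rw [hAXuq]; ring
    have hx : F (m + 1) = algebraMap ℚ[X] (RatFunc ℚ) ((u - q) * B) /
        algebraMap ℚ[X] (RatFunc ℚ) (X * (u * u)) := by
      rw [hx0, eab, epp, map_mul (algebraMap ℚ[X] (RatFunc ℚ)) X ((u - q) * B),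
        map_mul (algebraMap ℚ[X] (RatFunc ℚ)) X (X * (u * u)),
        mul_div_mul_left _ _ (RatFunc.algebraMap_ne_zero X_ne_zero)]
    have huq : IsCoprime u q := hco.of_isCoprime_of_dvd_left ⟨X, by rw [hpu]; ring⟩
    have huqu : IsCoprime (u - q) u := by
      have h1 := (huq.symm.neg_left).add_mul_left_left 1
      rwa [show -q + u * 1 = u - q from by ring] at h1
    have hBu : IsCoprime B u := by
      have h1 := (huq.symm.neg_left).add_mul_left_left X
      have e : -q + u * X = B := by
        rw [hB]; conv_rhs => rw [hpu]
        ring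
      rwa [e] at h1
    have huqX : IsCoprime (u - q) X := by
      refine ((irreducible_X.coprime_iff_not_dvd).mpr ?_).symm
      rw [X_dvd_iff, coeff_sub, huc]
      exact sub_ne_zero.mpr hp1q0
    have hBX : IsCoprime B X := by
      refine ((irreducible_X.coprime_iff_not_dvd).mpr ?_).symm
      rw [X_dvd_iff, hB0, hp00, zero_sub]
      exact neg_ne_zero.mpr hq00
    have hcp : IsCoprime ((u - q) * B) (X * (u * u)) :=
      (huqX.mul_left hBX).mul_right ((huqu.mul_left hBu).mul_right (huqu.mul_left hBu))
    have hQne : X * (u * u) ≠ 0 := mul_ne_zero X_ne_zero (mul_ne_zero hu0 hu0)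
    obtain ⟨hnum, hden⟩ := num_denom_of_div hQne hcp hx
    have hlcQ : (X * (u * u)).leadingCoeff = L * L := by
      rw [leadingCoeff_mul, leadingCoeff_X, one_mul, leadingCoeff_mul, hul]
    have hk : (X * (u * u)).leadingCoeff⁻¹ ≠ 0 := by
      rw [hlcQ]; exact inv_ne_zero (mul_ne_zero hL0 hL0)
    have hcond : Cond (m + 1) (F (m + 1)).num (F (m + 1)).denom := by
      rw [hnum, hden]
      refine Cond_C_mul hk ⟨fun hh => absurd hh (by omega), fun _ => ?_, fun hh => absurd hh (by omega)⟩
      refine ⟨?_, ?_, ?_, ?_⟩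
      · rw [mul_coeff_zero, coeff_X_zero, zero_mul]
      · rw [coeff_X_mul, mul_coeff_zero, huc]
        exact mul_ne_zero hp1 hp1
      · rw [mul_coeff_zero, coeff_sub, huc, hB0, hp00, zero_sub]
        exact mul_ne_zero (sub_ne_zero.mpr hp1q0) (neg_ne_zero.mpr hq00)
      · rw [mul_coeff_zero, coeff_sub, huc, hB0, hp00, zero_sub, coeff_X_mul, mul_coeff_zero, huc]
        intro heq
        exact quad2 (p.coeff 1) (q.coeff 0) hq00 (by linear_combination heq)
    -- degrees
    rcases hPar with ⟨h2, hqd, hAd, hAl, hBd, hBl⟩ | ⟨h2, hqd, hAd, hAl, hBd, hBl⟩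
    · -- m even, m % 6 = 0
      have huqne : u - q ≠ 0 := by
        intro h0; rw [h0, mul_zero] at hAXuq; exact hAne hAXuq
      have hduq : (u - q).natDegree = n := by
        have := hAd
        rw [hAXuq, natDegree_mul X_ne_zero huqne, natDegree_X] at this
        omega
      have hluq : (u - q).leadingCoeff = -1 := by
        have := hAl
        rwa [hAXuq, leadingCoeff_mul, leadingCoeff_X, one_mul] at this
      have hndeg : (F (m + 1)).num.natDegree = n + n := by
        rw [hnum, natDegree_C_mul hk, natDegree_mul huqne hBne, hduq, hBd]
      have hddeg : (F (m + 1)).denom.natDegree = n + n - 1 := by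
        rw [hden, natDegree_C_mul hk, natDegree_mul X_ne_zero (mul_ne_zero hu0 hu0),
          natDegree_X, natDegree_mul hu0 hu0]
        omega
      have hlc : (F (m + 1)).num.leadingCoeff = (L * L)⁻¹ * (-1 * (L - 1)) := by
        rw [hnum, leadingCoeff_mul, leadingCoeff_C, hlcQ, leadingCoeff_mul, hluq, hBl]
      refine ⟨⟨by omega, by omega, ?_, hcond⟩, by rw [hndeg, if_pos h3]; omega⟩
      rw [hlc]
      intro heq
      apply quad1 L
      have hLL : L * L ≠ 0 := mul_ne_zero hL0 hL0
      field_simp at heq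
      linear_combination -heq
    · -- m odd, m % 6 = 3
      have huqne : u - q ≠ 0 := by
        intro h0; rw [h0, mul_zero] at hAXuq; exact hAne hAXuq
      have hduq : (u - q).natDegree + 1 = n := by
        have := hAd
        rw [hAXuq, natDegree_mul X_ne_zero huqne, natDegree_X] at this
        omega
      have hluq : (u - q).leadingCoeff = L - 1 := by
        have := hAl
        rwa [hAXuq, leadingCoeff_mul, leadingCoeff_X, one_mul] at this
      have hndeg : (F (m + 1)).num.natDegree = (u - q).natDegree + n := by
        rw [hnum, natDegree_C_mul hk, natDegree_mul huqne hBne, hBd]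
      have hddeg : (F (m + 1)).denom.natDegree = 1 + (u.natDegree + u.natDegree) := by
        rw [hden, natDegree_C_mul hk, natDegree_mul X_ne_zero (mul_ne_zero hu0 hu0),
          natDegree_X, natDegree_mul hu0 hu0]
      have hlc : (F (m + 1)).num.leadingCoeff = (L * L)⁻¹ * ((L - 1) * L) := by
        rw [hnum, leadingCoeff_mul, leadingCoeff_C, hlcQ, leadingCoeff_mul, hluq, hBl]
      refine ⟨⟨by omega, by omega, ?_, hcond⟩, by rw [hndeg, if_pos h3]; omega⟩
      rw [hlc]
      intro heq
      have hLL : L * L ≠ 0 := mul_ne_zero hL0 hL0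
      field_simp at heq
      exact hL0 (by linear_combination -L * heq)
  -- ================== CASE m % 3 = 1 ==================
  · obtain ⟨hq00, hq1, hp00, hpq1⟩ := hc1 h3
    have hXp : IsCoprime X p := (irreducible_X.coprime_iff_not_dvd).mpr
      (by rw [X_dvd_iff]; exact hp00)
    have hAp : IsCoprime A p := by
      have h1 := ((hXp.mul_left hco.symm).neg_left).add_mul_left_left 1
      rwa [show -(X * q) + p * 1 = A from by rw [hA]; ring] at h1
    have hBp : IsCoprime B p := by
      have h1 := (hco.symm.neg_left).add_mul_left_left 1
      rwa [show -q + p * 1 = B from by rw [hB]; ring] at h1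
    have hABp : IsCoprime (A * B) p := hAp.mul_left hBp
    have hcp : IsCoprime (A * B) (p * p) := hABp.mul_right hABp
    have hQne : p * p ≠ 0 := mul_ne_zero hp0 hp0
    obtain ⟨hnum, hden⟩ := num_denom_of_div hQne hcp hx0
    have hlcQ : (p * p).leadingCoeff = L * L := by rw [leadingCoeff_mul]
    have hk : (p * p).leadingCoeff⁻¹ ≠ 0 := by
      rw [hlcQ]; exact inv_ne_zero (mul_ne_zero hL0 hL0)
    have hcond : Cond (m + 1) (F (m + 1)).num (F (m + 1)).denom := by
      rw [hnum, hden]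
      refine Cond_C_mul hk ⟨fun hh => absurd hh (by omega), fun hh => absurd hh (by omega), fun _ => ?_⟩
      refine ⟨?_, ?_, ?_, ?_⟩
      · rw [mul_coeff_zero, hA0, hB0, hq00, sub_zero]
        exact mul_ne_zero hp00 hp00
      · rw [mul_coeff_zero, hA0, hB0, hq00, sub_zero, mul_coeff_zero]
      · rw [coeff_mul_one', hA0, hA1, hB0, hB1, hq00, sub_zero, coeff_mul_one']
        intro heq
        exact mul_ne_zero hp00 hq1 (by linear_combination -heq)
      · rw [coeff_mul_one', hA0, hA1, hB0, hB1, hq00, sub_zero, coeff_mul_one', mul_coeff_zero]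
        intro heq
        exact mul_ne_zero hp00 hpq1 (by linear_combination -heq)
    rcases hPar with ⟨h2, hqd, hAd, hAl, hBd, hBl⟩ | ⟨h2, hqd, hAd, hAl, hBd, hBl⟩
    · have hndeg : (F (m + 1)).num.natDegree = (n + 1) + n := by
        rw [hnum, natDegree_C_mul hk, natDegree_mul hAne hBne, hAd, hBd]
      have hddeg : (F (m + 1)).denom.natDegree = n + n := by
        rw [hden, natDegree_C_mul hk, natDegree_mul hp0 hp0]
      have hlc : (F (m + 1)).num.leadingCoeff = (L * L)⁻¹ * (-1 * (L - 1)) := by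
        rw [hnum, leadingCoeff_mul, leadingCoeff_C, hlcQ, leadingCoeff_mul, hAl, hBl]
      refine ⟨⟨by omega, by omega, ?_, hcond⟩, by rw [hndeg, if_neg (by omega)]; omega⟩
      rw [hlc]
      intro heq
      apply quad1 L
      have hLL : L * L ≠ 0 := mul_ne_zero hL0 hL0
      field_simp at heq
      linear_combination -heq
    · have hndeg : (F (m + 1)).num.natDegree = n + n := by
        rw [hnum, natDegree_C_mul hk, natDegree_mul hAne hBne, hAd, hBd]
      have hddeg : (F (m + 1)).denom.natDegree = n + n := by
        rw [hden, natDegree_C_mul hk, natDegree_mul hp0 hp0]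
      have hlc : (F (m + 1)).num.leadingCoeff = (L * L)⁻¹ * ((L - 1) * L) := by
        rw [hnum, leadingCoeff_mul, leadingCoeff_C, hlcQ, leadingCoeff_mul, hAl, hBl]
      refine ⟨⟨by omega, by omega, ?_, hcond⟩, by rw [hndeg, if_neg (by omega)]; omega⟩
      rw [hlc]
      intro heq
      have hLL : L * L ≠ 0 := mul_ne_zero hL0 hL0
      field_simp at heq
      exact hL0 (by linear_combination -L * heq)
  -- ================== CASE m % 3 = 2 ==================
  · obtain ⟨hp00, hpq0, hpq11, hpqq⟩ := hc2 h3
    have hXp : IsCoprime X p := (irreducible_X.coprime_iff_not_dvd).mpr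
      (by rw [X_dvd_iff]; exact hp00)
    have hAp : IsCoprime A p := by
      have h1 := ((hXp.mul_left hco.symm).neg_left).add_mul_left_left 1
      rwa [show -(X * q) + p * 1 = A from by rw [hA]; ring] at h1
    have hBp : IsCoprime B p := by
      have h1 := (hco.symm.neg_left).add_mul_left_left 1
      rwa [show -q + p * 1 = B from by rw [hB]; ring] at h1
    have hABp : IsCoprime (A * B) p := hAp.mul_left hBp
    have hcp : IsCoprime (A * B) (p * p) := hABp.mul_right hABp
    have hQne : p * p ≠ 0 := mul_ne_zero hp0 hp0
    obtain ⟨hnum, hden⟩ := num_denom_of_div hQne hcp hx0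
    have hlcQ : (p * p).leadingCoeff = L * L := by rw [leadingCoeff_mul]
    have hk : (p * p).leadingCoeff⁻¹ ≠ 0 := by
      rw [hlcQ]; exact inv_ne_zero (mul_ne_zero hL0 hL0)
    have hcond : Cond (m + 1) (F (m + 1)).num (F (m + 1)).denom := by
      rw [hnum, hden]
      refine Cond_C_mul hk ⟨fun _ => ?_, fun hh => absurd hh (by omega), fun hh => absurd hh (by omega)⟩
      refine ⟨?_, ?_, ?_, ?_⟩
      · rw [mul_coeff_zero, hA0, hB0, hpq0, sub_self, mul_zero]
      · rw [coeff_mul_one', hA0, hA1, hB0, hB1, hpq0, sub_self, mul_zero, add_zero]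
        exact mul_ne_zero (hpq0 ▸ hp00) (sub_ne_zero.mpr hpq11)
      · rw [mul_coeff_zero]
        exact mul_ne_zero hp00 hp00
      · rw [coeff_mul_one', hA0, hA1, hB0, hB1, hpq0, sub_self, mul_zero, add_zero, mul_coeff_zero]
        intro heq
        have hqq0 : q.coeff 0 ≠ 0 := hpq0 ▸ hp00
        apply hpqq
        exact mul_left_cancel₀ hqq0 (by linear_combination heq + (p.coeff 0 + q.coeff 0) * hpq0)
    rcases hPar with ⟨h2, hqd, hAd, hAl, hBd, hBl⟩ | ⟨h2, hqd, hAd, hAl, hBd, hBl⟩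
    · have hndeg : (F (m + 1)).num.natDegree = (n + 1) + n := by
        rw [hnum, natDegree_C_mul hk, natDegree_mul hAne hBne, hAd, hBd]
      have hddeg : (F (m + 1)).denom.natDegree = n + n := by
        rw [hden, natDegree_C_mul hk, natDegree_mul hp0 hp0]
      have hlc : (F (m + 1)).num.leadingCoeff = (L * L)⁻¹ * (-1 * (L - 1)) := by
        rw [hnum, leadingCoeff_mul, leadingCoeff_C, hlcQ, leadingCoeff_mul, hAl, hBl]
      refine ⟨⟨by omega, by omega, ?_, hcond⟩, by rw [hndeg, if_neg (by omega)]; omega⟩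
      rw [hlc]
      intro heq
      apply quad1 L
      have hLL : L * L ≠ 0 := mul_ne_zero hL0 hL0
      field_simp at heq
      linear_combination -heq
    · have hndeg : (F (m + 1)).num.natDegree = n + n := by
        rw [hnum, natDegree_C_mul hk, natDegree_mul hAne hBne, hAd, hBd]
      have hddeg : (F (m + 1)).denom.natDegree = n + n := by
        rw [hden, natDegree_C_mul hk, natDegree_mul hp0 hp0]
      have hlc : (F (m + 1)).num.leadingCoeff = (L * L)⁻¹ * ((L - 1) * L) := by
        rw [hnum, leadingCoeff_mul, leadingCoeff_C, hlcQ, leadingCoeff_mul, hAl, hBl]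
      refine ⟨⟨by omega, by omega, ?_, hcond⟩, by rw [hndeg, if_neg (by omega)]; omega⟩
      rw [hlc]
      intro heq
      have hLL : L * L ≠ 0 := mul_ne_zero hL0 hL0
      field_simp at heq
      exact hL0 (by linear_combination -L * heq)


def tfun (m : ℕ) : ℤ :=
  if m % 6 = 0 then 19 else if m % 6 = 1 then 17 else if m % 6 = 2 then 13
    else if m % 6 = 3 then 26 else if m % 6 = 4 then 10 else 20

theorem F0_num : (F 0).num = 2 * X := by
  have hmon : (X + 1 : ℚ[X]).Monic := by monicity!
  have hco : IsCoprime (2 * X : ℚ[X]) (X + 1) := by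
    refine ⟨C (-2⁻¹), 1, ?_⟩
    have h1 : (C (-2⁻¹ : ℚ)) * (2 * X) = -X := by
      rw [show (2 : ℚ[X]) = C 2 from by rw [map_ofNat]]
      rw [← mul_assoc, ← C_mul]; norm_num
    rw [h1]; ring
  have hF0 : F 0 = algebraMap ℚ[X] (RatFunc ℚ) (2 * X) / algebraMap ℚ[X] (RatFunc ℚ) (X + 1) := by
    show (2 * RatFunc.X) / (RatFunc.X + 1) = _
    rw [map_mul, map_add, map_one, RatFunc.algebraMap_X, map_ofNat]
  exact (num_denom_unique hmon hco hF0).1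

theorem F0_deg : (F 0).num.natDegree = 1 := by
  rw [F0_num, show (2 * X : ℚ[X]) = C 2 * X from by rw [map_ofNat],
    natDegree_C_mul (by norm_num), natDegree_X]

theorem main (m : ℕ) :
    Inv m ∧ 21 * (((F m).num.natDegree : ℤ) + 1) = 23 * 2 ^ m + tfun m := by
  induction m with
  | zero =>
    refine ⟨inv_zero, ?_⟩
    rw [F0_deg, tfun]
    norm_num
  | succ m ih =>
    obtain ⟨hInv, hnum⟩ := ih
    obtain ⟨hInv', hrec⟩ := step m hInv
    refine ⟨hInv', ?_⟩
    have h6 : m % 6 = 0 ∨ m % 6 = 1 ∨ m % 6 = 2 ∨ m % 6 = 3 ∨ m % 6 = 4 ∨ m % 6 = 5 := by omega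
    have hcast := congrArg (Nat.cast : ℕ → ℤ) hrec
    push_cast at hcast
    rw [pow_succ]
    rcases h6 with h | h | h | h | h | h
    · rw [if_pos (show m % 3 = 0 by omega)] at hcast
      rw [show tfun (m + 1) = 17 from by simp [tfun, show (m + 1) % 6 = 1 by omega]]
      rw [show tfun m = 19 from by simp [tfun, h]] at hnum
      rw [show ((m : ℤ) % 2) = 0 from by omega] at hcast
      linarith
    · rw [if_neg (show ¬ m % 3 = 0 by omega)] at hcast
      rw [show tfun (m + 1) = 13 from by simp [tfun, show (m + 1) % 6 = 2 by omega]]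
      rw [show tfun m = 17 from by simp [tfun, h]] at hnum
      rw [show ((m : ℤ) % 2) = 1 from by omega] at hcast
      linarith
    · rw [if_neg (show ¬ m % 3 = 0 by omega)] at hcast
      rw [show tfun (m + 1) = 26 from by simp [tfun, show (m + 1) % 6 = 3 by omega]]
      rw [show tfun m = 13 from by simp [tfun, h]] at hnum
      rw [show ((m : ℤ) % 2) = 0 from by omega] at hcast
      linarith
    · rw [if_pos (show m % 3 = 0 by omega)] at hcast
      rw [show tfun (m + 1) = 10 from by simp [tfun, show (m + 1) % 6 = 4 by omega]]
      rw [show tfun m = 26 from by simp [tfun, h]] at hnum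
      rw [show ((m : ℤ) % 2) = 1 from by omega] at hcast
      linarith
    · rw [if_neg (show ¬ m % 3 = 0 by omega)] at hcast
      rw [show tfun (m + 1) = 20 from by simp [tfun, show (m + 1) % 6 = 5 by omega]]
      rw [show tfun m = 10 from by simp [tfun, h]] at hnum
      rw [show ((m : ℤ) % 2) = 0 from by omega] at hcast
      linarith
    · rw [if_neg (show ¬ m % 3 = 0 by omega)] at hcast
      rw [show tfun (m + 1) = 19 from by simp [tfun, show (m + 1) % 6 = 0 by omega]]
      rw [show tfun m = 20 from by simp [tfun, h]] at hnum
      rw [show ((m : ℤ) % 2) = 1 from by omega] at hcast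
      linarith

theorem deg_G (m : ℕ) (h : Inv m) :
    ((X + 1) * (F m).num - X * (F m).denom).natDegree = (F m).num.natDegree + 1 := by
  obtain ⟨hn1, hdeg, hL1, -⟩ := h
  obtain ⟨p, q, hp, hq⟩ : ∃ p q, (F m).num = p ∧ (F m).denom = q := ⟨_, _, rfl, rfl⟩
  simp only [hp, hq] at hn1 hdeg hL1 ⊢
  set n := p.natDegree with hn
  set L := p.leadingCoeff with hlcL
  have hp0 : p ≠ 0 := by
    intro h0; rw [h0, natDegree_zero] at hn; omega
  have hq0 : q ≠ 0 := hq ▸ (F m).denom_ne_zero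
  have hqm : q.Monic := hq ▸ RatFunc.monic_denom (F m)
  have hL0 : L ≠ 0 := leadingCoeff_ne_zero.mpr hp0
  have hpn : p.coeff n = L := coeff_natDegree
  have hX1 : (X + 1 : ℚ[X]).natDegree = 1 := by compute_degree!
  have h1 : ((X + 1) * p).natDegree ≤ n + 1 :=
    le_trans (natDegree_mul_le) (by rw [hX1]; omega)
  have hc1 : ((X + 1) * p).coeff (n + 1) = L := by
    rw [show (X + 1) * p = X * p + p from by ring, coeff_add, coeff_X_mul, hpn,
      coeff_eq_zero_of_natDegree_lt (by omega), add_zero]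
  have h2 : (X * q).natDegree ≤ n + 1 := by
    rw [natDegree_mul X_ne_zero hq0, natDegree_X]; omega
  have hc2 : (X * q).coeff (n + 1) = q.coeff n := coeff_X_mul q n
  have htop : L - q.coeff n ≠ 0 := by
    rcases Nat.mod_two_eq_zero_or_one m with hm | hm
    · have hqd : q.natDegree = n := by omega
      rw [← hqd, hqm.coeff_natDegree]
      exact sub_ne_zero.mpr hL1
    · rw [coeff_eq_zero_of_natDegree_lt (by omega), sub_zero]
      exact hL0
  exact (natDegree_sub_eq h1 h2 (by rw [hc1, hc2]; exact htop)).1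

end DegAux

theorem degree_X_add_one_mul_num_sub_X_mul_denom (m : ℕ) :
    21 * ((((Polynomial.X + 1) * (F m).num - Polynomial.X * (F m).denom).natDegree : ℤ)) =
      23 * 2 ^ m +
        (if m % 6 = 0 then 19 else if m % 6 = 1 then 17 else if m % 6 = 2 then 13
          else if m % 6 = 3 then 26 else if m % 6 = 4 then 10 else 20) := by
  obtain ⟨hInv, hnum⟩ := DegAux.main m
  rw [DegAux.deg_G m hInv]
  simp only [DegAux.tfun] at hnum
  push_cast
  linarith
end

section
/- Define g : ℕ → ℤ by g m = 0 for m ≤ 2, g 3 = 1, and g m = 2^(m−4) for m ≥ 4, and define f : ℕ → ℤ by f m = ∑_{k=0}^{⌊m/3⌋} g (m − 3k). Then for every m ≥ 1, 14·f m = 2^m + w(m), where w(m) = 6 if m ≡ 0 (mod 3), w(m) = −2 if m ≡ 1 (mod 3), and w(m) = −4 if m ≡ 2 (mod 3). -/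
def g (m : ℕ) : ℤ :=
  if m ≤ 2 then 0 else if m = 3 then 1 else 2 ^ (m - 4)

def f (m : ℕ) : ℤ :=
  ∑ k ∈ Finset.range (m / 3 + 1), g (m - 3 * k)

lemma f_add_three (m : ℕ) : f (m + 3) = f m + g (m + 3) := by
  unfold f
  have h3 : (m + 3) / 3 = m / 3 + 1 := by omega
  rw [h3, Finset.sum_range_succ']
  have : ∀ k, m + 3 - 3 * (k + 1) = m - 3 * k := fun k => by omega
  simp only [this, Nat.mul_zero, Nat.sub_zero]

theorem count_f_m0_sv1 (m : ℕ) (hm : 1 ≤ m) :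
    14 * f m =
      2 ^ m + (if m % 3 = 0 then 6 else if m % 3 = 1 then -2 else -4) := by
  induction m using Nat.strong_induction_on with
  | _ m ih =>
    match m, hm with
    | 1, _ => norm_num [f, g, Finset.sum_range_succ]
    | 2, _ => norm_num [f, g, Finset.sum_range_succ]
    | 3, _ => norm_num [f, g, Finset.sum_range_succ]
    | (n+4), _ =>
      have h := ih (n + 1) (by omega) (by omega)
      have hf : f (n + 4) = f (n + 1) + g (n + 4) := f_add_three (n + 1)
      have hg : g (n + 4) = 2 ^ n := by
        unfold g
        have h1 : ¬ (n + 4 ≤ 2) := by omega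
        have h2 : ¬ (n + 4 = 3) := by omega
        simp [h1, h2]
      have hpow : (2 : ℤ) ^ (n + 4) = 16 * 2 ^ n := by ring
      have hpow1 : (2 : ℤ) ^ (n + 1) = 2 * 2 ^ n := by ring
      have hmod : (n + 4) % 3 = (n + 1) % 3 := by omega
      rw [hf, hg, hpow, hmod, hpow1] at *
      split_ifs at h ⊢ <;> omega
end
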